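/- arXiv:0810.1532 — 7 statements merged into one kernel-verified Lean document; each statement's English description precedes it below -/
import Mathlib

section
/- Let Ψ ⊆ R be extremal (with respect to a vector ξ whose maximal pairing M with R is positive). Suppose m : R → ℕ and n : Ψ → ℕ satisfy ∑_{α∈R} m(α)·α = ∑_{β∈Ψ} n(β)·β in E. Then ∑_{β∈Ψ} n(β) ≤ ∑_{α∈R} m(α), with equality if and only if m(α) = 0 for every α ∈ R \ Ψ. -/
open RealInnerProductSpace

/-- Let `Ψ ⊆ R` be extremal (w.r.t. `ξ` whose maximal pairing `M` with `R` is
positive).  If `∑_{α ∈ R} m α • α = ∑_{β ∈ Ψ} n β • β` then `∑_{β ∈ Ψ} n β ≤ ∑_{α ∈ R} m α`,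
with equality iff `m` vanishes on `R \ Ψ`. -/
theorem stmt_0 {E : Type*} [NormedAddCommGroup E] [InnerProductSpace ℝ E]
    (R : Finset E) (hRne : R.Nonempty) (hRsym : ∀ α ∈ R, -α ∈ R) (hR0 : (0 : E) ∉ R)
    (ξ : E) (M : ℝ) (hM : IsGreatest ((fun β => ⟪ξ, β⟫) '' (R : Set E)) M) (hMpos : 0 < M)
    (Ψ : Finset E) (hΨ : ∀ α, α ∈ Ψ ↔ α ∈ R ∧ ⟪ξ, α⟫ = M)
    (m n : E → ℕ)
    (hsum : ∑ α ∈ R, (m α : ℝ) • α = ∑ β ∈ Ψ, (n β : ℝ) • β) :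
    (∑ β ∈ Ψ, n β) ≤ (∑ α ∈ R, m α) ∧
      ((∑ β ∈ Ψ, n β) = (∑ α ∈ R, m α) ↔ ∀ α ∈ R, α ∉ Ψ → m α = 0) := by
  have hle : ∀ α ∈ R, ⟪ξ, α⟫ ≤ M := fun α hα => hM.2 ⟨α, by simpa using hα, rfl⟩
  -- pair hsum with ξ
  have key : ∑ α ∈ R, (m α : ℝ) * ⟪ξ, α⟫ = M * ∑ β ∈ Ψ, (n β : ℝ) := by
    have := congrArg (fun v => ⟪ξ, v⟫) hsum
    simp only [inner_sum, real_inner_smul_right] at this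
    rw [this, Finset.mul_sum]
    refine Finset.sum_congr rfl fun β hβ => ?_
    rw [((hΨ β).1 hβ).2]; ring
  have tle : ∀ α ∈ R, (m α : ℝ) * ⟪ξ, α⟫ ≤ (m α : ℝ) * M := fun α hα =>
    mul_le_mul_of_nonneg_left (hle α hα) (Nat.cast_nonneg _)
  have hsumle : M * ∑ β ∈ Ψ, (n β : ℝ) ≤ M * ∑ α ∈ R, (m α : ℝ) := by
    rw [← key, Finset.mul_sum]
    exact Finset.sum_le_sum fun α hα => by
      rw [mul_comm M]; exact tle α hα
  have hNle : (∑ β ∈ Ψ, (n β : ℝ)) ≤ ∑ α ∈ R, (m α : ℝ) :=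
    le_of_mul_le_mul_left hsumle hMpos
  have hle' : (∑ β ∈ Ψ, n β) ≤ (∑ α ∈ R, m α) := by
    exact_mod_cast (by push_cast at hNle ⊢; exact hNle : ((∑ β ∈ Ψ, n β : ℕ) : ℝ) ≤ ((∑ α ∈ R, m α : ℕ) : ℝ))
  refine ⟨hle', ?_⟩
  constructor
  · intro heq α hα hαΨ
    -- equality of sums forces termwise equality
    have hReq : (∑ β ∈ Ψ, (n β : ℝ)) = ∑ α ∈ R, (m α : ℝ) := by
      exact_mod_cast congrArg (Nat.cast : ℕ → ℝ) (by push_cast; exact_mod_cast heq)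
    have hEq : ∑ α ∈ R, (m α : ℝ) * ⟪ξ, α⟫ = ∑ α ∈ R, (m α : ℝ) * M := by
      rw [key, hReq, Finset.mul_sum]
      exact Finset.sum_congr rfl fun α _ => mul_comm _ _
    have := (Finset.sum_eq_sum_iff_of_le tle).1 hEq α hα
    by_contra hm0
    have hmpos : 0 < (m α : ℝ) := by positivity
    have : ⟪ξ, α⟫ = M := by
      have := mul_left_cancel₀ (ne_of_gt hmpos) this
      exact this
    exact hαΨ ((hΨ α).2 ⟨hα, this⟩)
  · intro hvan
    -- ∑ over R of m equals ∑ over Ψ of m (others vanish); and on Ψ compare via M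
    have hEq : ∑ α ∈ R, (m α : ℝ) * ⟪ξ, α⟫ = M * ∑ α ∈ R, (m α : ℝ) := by
      rw [Finset.mul_sum]
      refine Finset.sum_congr rfl fun α hα => ?_
      by_cases hαΨ : α ∈ Ψ
      · rw [((hΨ α).1 hαΨ).2]; ring
      · rw [hvan α hα hαΨ]; simp
    have : M * ∑ β ∈ Ψ, (n β : ℝ) = M * ∑ α ∈ R, (m α : ℝ) := by rw [← key, hEq]
    have hR : (∑ β ∈ Ψ, (n β : ℝ)) = ∑ α ∈ R, (m α : ℝ) :=
      mul_left_cancel₀ (ne_of_gt hMpos) this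
    exact_mod_cast (by push_cast at hR ⊢; exact_mod_cast hR :
      ((∑ β ∈ Ψ, n β : ℕ) : ℝ) = ((∑ α ∈ R, m α : ℕ) : ℝ))
end

section
/- For all r, s ≥ 1, all finite m ∈ ℕ^r and n ∈ ℕ^s and all a ∈ ℤ, the map (x, y) ↦ (m − x, n − y) is an isomorphism of quivers from Γ_a(m,n) onto the opposite quiver of Γ_{|m|−|n|−a}(m,n), where |m| and |n| denote the sums of the coordinates of m and n. -/
/-- Vertices of the quiver `Γ_a(m, n)` for finite bounds `m ∈ ℕ^r`, `n ∈ ℕ^s`. -/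
def gammaVert {r s : ℕ} (m : Fin r → ℕ) (n : Fin s → ℕ) (a : ℤ)
    (p : (Fin r → ℕ) × (Fin s → ℕ)) : Prop :=
  (∀ i, p.1 i ≤ m i) ∧ (∀ j, p.2 j ≤ n j) ∧
    (∑ i, (p.1 i : ℤ)) = (∑ j, (p.2 j : ℤ)) + a

/-- Arrows of `Γ_a(m, n)` : there is an arrow `(x, y) ← (x + e_i, y + e_j)`. -/
def gammaArrow {r s : ℕ} (p q : (Fin r → ℕ) × (Fin s → ℕ)) : Prop :=
  ∃ (i : Fin r) (j : Fin s), q.1 = p.1 + Pi.single i 1 ∧ q.2 = p.2 + Pi.single j 1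

/-- the map `(x, y) ↦ (m − x, n − y)` is an isomorphism of quivers from
`Γ_a(m, n)` onto the opposite quiver of `Γ_{|m| − |n| − a}(m, n)` : it maps vertices of the
former bijectively onto vertices of the latter, and `(p, q)` is an arrow iff `(F q, F p)` is. -/
theorem stmt_4 (r s : ℕ) (hr : 1 ≤ r) (hs : 1 ≤ s)
    (m : Fin r → ℕ) (n : Fin s → ℕ) (a : ℤ)
    (b : ℤ) (hb : b = (∑ i, (m i : ℤ)) - (∑ j, (n j : ℤ)) - a)
    (F : (Fin r → ℕ) × (Fin s → ℕ) → (Fin r → ℕ) × (Fin s → ℕ))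
    (hF : ∀ p, F p = (fun i => m i - p.1 i, fun j => n j - p.2 j)) :
    (∀ p, gammaVert m n a p → gammaVert m n b (F p)) ∧
      (∀ p q, gammaVert m n a p → gammaVert m n a q → F p = F q → p = q) ∧
      (∀ q, gammaVert m n b q → ∃ p, gammaVert m n a p ∧ F p = q) ∧
      (∀ p q, gammaVert m n a p → gammaVert m n a q →
        (gammaArrow p q ↔ gammaArrow (F q) (F p))) := by
  -- F is an involution on points with bounded coordinates
  have hinv : ∀ p : (Fin r → ℕ) × (Fin s → ℕ),
      (∀ i, p.1 i ≤ m i) → (∀ j, p.2 j ≤ n j) → F (F p) = p := by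
    intro p h1 h2
    rw [hF, hF]
    ext k
    · simp only
      have := h1 k; omega
    · simp only
      have := h2 k; omega
  -- F sends c-vertices to (∑m-∑n-c)-vertices
  have hmap : ∀ (c d : ℤ), d = (∑ i, (m i : ℤ)) - (∑ j, (n j : ℤ)) - c →
      ∀ p, gammaVert m n c p → gammaVert m n d (F p) := by
    intro c d hd p hp
    obtain ⟨h1, h2, h3⟩ := hp
    rw [hF]
    refine ⟨fun i => Nat.sub_le _ _, fun j => Nat.sub_le _ _, ?_⟩
    simp only
    have e1 : ∀ i : Fin r, ((m i - p.1 i : ℕ) : ℤ) = (m i : ℤ) - (p.1 i : ℤ) := by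
      intro i; exact_mod_cast Nat.cast_sub (h1 i)
    have e2 : ∀ j : Fin s, ((n j - p.2 j : ℕ) : ℤ) = (n j : ℤ) - (p.2 j : ℤ) := by
      intro j; exact_mod_cast Nat.cast_sub (h2 j)
    simp only [e1, e2, Finset.sum_sub_distrib]
    rw [hd]; linarith
  have hab : a = (∑ i, (m i : ℤ)) - (∑ j, (n j : ℤ)) - b := by rw [hb]; ring
  refine ⟨hmap a b hb, ?_, ?_, ?_⟩
  · -- injectivity
    intro p q hp hq hpq
    have := congrArg F hpq
    rwa [hinv p hp.1 hp.2.1, hinv q hq.1 hq.2.1] at this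
  · -- surjectivity
    intro q hq
    exact ⟨F q, hmap b a hab q hq, hinv q hq.1 hq.2.1⟩
  · -- arrows
    intro p q hp hq
    constructor
    · rintro ⟨i, j, h1, h2⟩
      refine ⟨i, j, ?_, ?_⟩
      · rw [hF, hF]
        funext k
        by_cases hk : k = i
        · subst hk
          have hq1 := hq.1 k
          rw [h1] at hq1 ⊢
          simp only [Pi.add_apply, Pi.single_eq_same] at hq1 ⊢
          omega
        · have : q.1 k = p.1 k := by rw [h1]; simp [Pi.single_eq_of_ne hk]
          simp [Pi.single_eq_of_ne hk, this]
      · rw [hF, hF]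
        funext k
        by_cases hk : k = j
        · subst hk
          have hq2 := hq.2.1 k
          rw [h2] at hq2 ⊢
          simp only [Pi.add_apply, Pi.single_eq_same] at hq2 ⊢
          omega
        · have : q.2 k = p.2 k := by rw [h2]; simp [Pi.single_eq_of_ne hk]
          simp [Pi.single_eq_of_ne hk, this]
    · rintro ⟨i, j, h1, h2⟩
      rw [hF, hF] at h1 h2
      refine ⟨i, j, ?_, ?_⟩
      · funext k
        have := congrFun h1 k
        simp only [Pi.add_apply] at this ⊢
        have hpk := hp.1 k
        have hqk := hq.1 k
        by_cases hk : k = i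
        · subst hk
          simp only [Pi.single_eq_same] at this ⊢
          omega
        · simp only [Pi.single_eq_of_ne hk] at this ⊢
          omega
      · funext k
        have := congrFun h2 k
        simp only [Pi.add_apply] at this ⊢
        have hpk := hp.2.1 k
        have hqk := hq.2.1 k
        by_cases hk : k = j
        · subst hk
          simp only [Pi.single_eq_same] at this ⊢
          omega
        · simp only [Pi.single_eq_of_ne hk] at this ⊢
          omega
end

section
/- Let r ≥ 2 and let m ∈ ℤ_{>0}^r have all entries positive. Then the quiver Ξ_0(m) is connected, and Ξ_1(m) is connected unless r = 2 and m = (1,1), in which case Ξ_1(m) consists of two vertices and no arrows. (Connected means: any two vertices are joined by a finite chain of vertices in which consecutive vertices are connected by an arrow in one direction or the other.) -/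
/-- Vertices of `Ξ_a(m)` : points `x ∈ ℕ^r` with `x ≤ m` coordinatewise and `|x| ≡ a (mod 2)`. -/
def xiVert {r : ℕ} (m : Fin r → ℕ) (a : ℕ) (x : Fin r → ℕ) : Prop :=
  (∀ i, x i ≤ m i) ∧ (∑ i, x i) % 2 = a

/-- Arrows of `Ξ(m)` : `x ← x + 2e_j` when `x j + 2 ≤ m j`, and `x ← x + e_i + e_j` when
`i < j`, `x i + 1 ≤ m i` and `x j + 1 ≤ m j`. -/
def xiArrow {r : ℕ} (m : Fin r → ℕ) (x y : Fin r → ℕ) : Prop :=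
  (∃ j, x j + 2 ≤ m j ∧ y = x + Pi.single j 2) ∨
    (∃ i j, i < j ∧ x i + 1 ≤ m i ∧ x j + 1 ≤ m j ∧ y = x + Pi.single i 1 + Pi.single j 1)

lemma sum_add_single {r : ℕ} {x y : Fin r → ℕ} {j : Fin r} {c : ℕ}
    (h : y = x + Pi.single j c) : ∑ i, y i = (∑ i, x i) + c := by
  subst h
  simp [Pi.add_apply, Finset.sum_add_distrib, Finset.sum_pi_single']

lemma arrow2 {r : ℕ} (m : Fin r → ℕ) (x : Fin r → ℕ) {i j : Fin r} (hij : i ≠ j)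
    (hi : x i + 1 ≤ m i) (hj : x j + 1 ≤ m j) :
    xiArrow m x (x + Pi.single i 1 + Pi.single j 1) := by
  rcases lt_or_gt_of_ne hij with h | h
  · exact Or.inr ⟨i, j, h, hi, hj, rfl⟩
  · refine Or.inr ⟨j, i, h, hj, hi, ?_⟩
    ring

lemma descent {r : ℕ} (m : Fin r → ℕ) {a : ℕ} (hm : ∀ i, 1 ≤ m i) (x : Fin r → ℕ)
    (hx : xiVert m a x) (h2 : 2 ≤ ∑ i, x i) :
    ∃ y, xiVert m a y ∧ (∑ i, y i) + 2 = ∑ i, x i ∧ xiArrow m y x := by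
  by_cases hbig : ∃ j, 2 ≤ x j
  · obtain ⟨j, hj⟩ := hbig
    set y : Fin r → ℕ := fun k => if k = j then x j - 2 else x k with hy
    have hxy : x = y + Pi.single j 2 := by
      funext k
      by_cases hk : k = j
      · subst hk; simp [hy, Pi.single_apply]; omega
      · simp [hy, hk, Pi.single_apply]
    have hsum : (∑ i, y i) + 2 = ∑ i, x i := by
      rw [sum_add_single hxy]
    refine ⟨y, ⟨fun i => ?_, ?_⟩, hsum, Or.inl ⟨j, ?_, hxy⟩⟩
    · by_cases hk : i = j
      · subst hk; have := hx.1 i; simp [hy]; omega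
      · have := hx.1 i; simpa [hy, hk] using this
    · have := hx.2; omega
    · have := hx.1 j
      simp [hy]; omega
  · push_neg at hbig
    have hi1 : ∃ i, x i ≠ 0 := by
      by_contra h; push_neg at h
      have : ∑ i, x i = 0 := Finset.sum_eq_zero fun i _ => h i
      omega
    obtain ⟨i, hi⟩ := hi1
    have hsplit : x i + ∑ k ∈ Finset.univ.erase i, x k = ∑ k, x k :=
      Finset.add_sum_erase Finset.univ x (Finset.mem_univ i)
    have hxi : x i = 1 := by have := hbig i; omega
    have : ∃ j ∈ Finset.univ.erase i, x j ≠ 0 := by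
      by_contra h; push_neg at h
      have : ∑ k ∈ Finset.univ.erase i, x k = 0 := Finset.sum_eq_zero h
      omega
    obtain ⟨j, hjmem, hj0⟩ := this
    have hji : j ≠ i := (Finset.mem_erase.mp hjmem).1
    have hxj : x j = 1 := by have := hbig j; omega
    set y : Fin r → ℕ := fun k => if k = i ∨ k = j then 0 else x k with hy
    have hxy : x = y + Pi.single i 1 + Pi.single j 1 := by
      funext k
      by_cases hk : k = i
      · subst hk
        simp [hy, Pi.single_apply, hxi, (Ne.symm hji : k ≠ j)]
      · by_cases hk' : k = j
        · subst hk'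
          simp [hy, Pi.single_apply, hxj, hk]
        · simp [hy, Pi.single_apply, hk, hk']
    have hsum : (∑ i, y i) + 2 = ∑ i, x i := by
      rw [hxy]
      simp [Pi.add_apply, Finset.sum_add_distrib, Finset.sum_pi_single']
    have harr : xiArrow m y x := by
      rw [hxy]
      refine arrow2 m y (Ne.symm hji) ?_ ?_
      · have : y i = 0 := by simp [hy]
        rw [this]; exact hm i
      · have : y j = 0 := by simp [hy]
        rw [this]; exact hm j
    refine ⟨y, ⟨fun k => ?_, ?_⟩, hsum, harr⟩
    · by_cases hk : k = i ∨ k = j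
      · have : y k = 0 := by simp [hy, hk]
        omega
      · have : y k = x k := by simp [hy, hk]
        rw [this]; exact hx.1 k
    · have := hx.2; omega

lemma reach {r : ℕ} (m : Fin r → ℕ) {a : ℕ} (ha : a < 2) (hm : ∀ i, 1 ≤ m i) :
    ∀ n (x : Fin r → ℕ) (hx : xiVert m a x), ∑ i, x i = n →
    ∃ y, ∃ hy : xiVert m a y, (∑ i, y i = a) ∧
      Relation.ReflTransGen
        (fun u v : {x : Fin r → ℕ // xiVert m a x} => xiArrow m u.1 v.1 ∨ xiArrow m v.1 u.1)
        ⟨x, hx⟩ ⟨y, hy⟩ := by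
  intro n
  induction n using Nat.strong_induction_on with
  | _ n ih =>
    intro x hx hn
    by_cases h2 : 2 ≤ ∑ i, x i
    · obtain ⟨y, hy, hsum, harr⟩ := descent m hm x hx h2
      obtain ⟨z, hz, hzs, hpath⟩ := ih (∑ i, y i) (by omega) y hy rfl
      refine ⟨z, hz, hzs, Relation.ReflTransGen.head ?_ hpath⟩
      exact Or.inr harr
    · have hxa : ∑ i, x i = a := by have := hx.2; omega
      exact ⟨x, hx, hxa, Relation.ReflTransGen.refl⟩

lemma eq_single_of_sum_one {r : ℕ} (x : Fin r → ℕ) (h : ∑ i, x i = 1) :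
    ∃ i, x = Pi.single i 1 := by
  have hi1 : ∃ i, x i ≠ 0 := by
    by_contra hh; push_neg at hh
    have : ∑ i, x i = 0 := Finset.sum_eq_zero fun i _ => hh i
    omega
  obtain ⟨i, hi⟩ := hi1
  have hsplit : x i + ∑ k ∈ Finset.univ.erase i, x k = ∑ k, x k :=
    Finset.add_sum_erase Finset.univ x (Finset.mem_univ i)
  have herase : ∑ k ∈ Finset.univ.erase i, x k = 0 := by omega
  have hz : ∀ k ∈ Finset.univ.erase i, x k = 0 :=
    (Finset.sum_eq_zero_iff).mp herase
  refine ⟨i, funext fun k => ?_⟩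
  by_cases hk : k = i
  · subst hk; simp [Pi.single_apply]; omega
  · have := hz k (Finset.mem_erase.mpr ⟨hk, Finset.mem_univ k⟩)
    simp [Pi.single_apply, hk, this]

lemma single_vert {r : ℕ} (m : Fin r → ℕ) (hm : ∀ i, 1 ≤ m i) (i : Fin r) :
    xiVert m 1 (Pi.single i 1) := by
  constructor
  · intro t
    by_cases ht : t = i
    · subst ht; simp; exact hm t
    · simp [Pi.single_apply, ht]
  · simp [Finset.sum_pi_single']

lemma conn_two {r : ℕ} (m : Fin r → ℕ) (hm : ∀ i, 1 ≤ m i) {i j : Fin r} (hij : i ≠ j)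
    (h2 : 2 ≤ m i) :
    Relation.ReflTransGen
      (fun u v : {x : Fin r → ℕ // xiVert m 1 x} => xiArrow m u.1 v.1 ∨ xiArrow m v.1 u.1)
      ⟨Pi.single i 1, single_vert m hm i⟩ ⟨Pi.single j 1, single_vert m hm j⟩ := by
  set z : Fin r → ℕ := Pi.single i 1 + Pi.single i 1 + Pi.single j 1 with hz
  have hzvert : xiVert m 1 z := by
    constructor
    · intro t
      by_cases hti : t = i
      · subst hti
        simp [hz, Pi.single_apply, hij, Ne.symm hij]
        omega
      · by_cases htj : t = j
        · subst htj
          simp [hz, Pi.single_apply, hti]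
          exact hm t
        · simp [hz, Pi.single_apply, hti, htj]
    · simp [hz, Pi.add_apply, Finset.sum_add_distrib, Finset.sum_pi_single']
  have ha1 : xiArrow m (Pi.single i 1) z := by
    refine arrow2 m (Pi.single i 1) hij ?_ ?_
    · simp; omega
    · rw [Pi.single_eq_of_ne (Ne.symm hij)]; exact hm j
  have ha2 : xiArrow m (Pi.single j 1) z := by
    refine Or.inl ⟨i, ?_, ?_⟩
    · rw [Pi.single_eq_of_ne hij]; exact h2
    · funext t
      by_cases hti : t = i
      · subst hti
        simp [hz, Pi.single_apply, hij, Ne.symm hij]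
      · by_cases htj : t = j
        · subst htj
          simp [hz, Pi.single_apply, hti]
        · simp [hz, Pi.single_apply, hti, htj]
  have step2 : Relation.ReflTransGen
      (fun u v : {x : Fin r → ℕ // xiVert m 1 x} => xiArrow m u.1 v.1 ∨ xiArrow m v.1 u.1)
      ⟨z, hzvert⟩ ⟨Pi.single j 1, single_vert m hm j⟩ :=
    Relation.ReflTransGen.single (Or.inr ha2)
  exact Relation.ReflTransGen.head (Or.inl ha1) step2

lemma conn_three {r : ℕ} (m : Fin r → ℕ) (hm : ∀ i, 1 ≤ m i) {i j k : Fin r}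
    (hij : i ≠ j) (hik : i ≠ k) (hjk : j ≠ k) :
    Relation.ReflTransGen
      (fun u v : {x : Fin r → ℕ // xiVert m 1 x} => xiArrow m u.1 v.1 ∨ xiArrow m v.1 u.1)
      ⟨Pi.single i 1, single_vert m hm i⟩ ⟨Pi.single j 1, single_vert m hm j⟩ := by
  set z : Fin r → ℕ := Pi.single i 1 + Pi.single j 1 + Pi.single k 1 with hz
  have hzvert : xiVert m 1 z := by
    constructor
    · intro t
      by_cases hti : t = i
      · subst hti; simp [hz, Pi.single_apply, hij, hik]; exact hm t
      · by_cases htj : t = j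
        · subst htj; simp [hz, Pi.single_apply, hti, hjk]; exact hm t
        · by_cases htk : t = k
          · subst htk; simp [hz, Pi.single_apply, hti, htj]; exact hm t
          · simp [hz, Pi.single_apply, hti, htj, htk]
    · simp [hz, Pi.add_apply, Finset.sum_add_distrib, Finset.sum_pi_single']
  have ha1 : xiArrow m (Pi.single i 1) z := by
    refine arrow2 m (Pi.single i 1) hjk ?_ ?_
    · rw [Pi.single_eq_of_ne (Ne.symm hij)]; exact hm j
    · rw [Pi.single_eq_of_ne (Ne.symm hik)]; exact hm k
  have ha2 : xiArrow m (Pi.single j 1) z := by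
    have he : Pi.single j 1 + Pi.single i 1 + Pi.single k 1 = z := by rw [hz]; ring
    rw [← he]
    refine arrow2 m (Pi.single j 1) hik ?_ ?_
    · rw [Pi.single_eq_of_ne hij]; exact hm i
    · rw [Pi.single_eq_of_ne (Ne.symm hjk)]; exact hm k
  have step2 : Relation.ReflTransGen
      (fun u v : {x : Fin r → ℕ // xiVert m 1 x} => xiArrow m u.1 v.1 ∨ xiArrow m v.1 u.1)
      ⟨z, hzvert⟩ ⟨Pi.single j 1, single_vert m hm j⟩ :=
    Relation.ReflTransGen.single (Or.inr ha2)
  exact Relation.ReflTransGen.head (Or.inl ha1) step2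

/-- for `r ≥ 2` and `m` with positive entries, `Ξ_0(m)` is connected, and
`Ξ_1(m)` is connected unless `r = 2` and `m = (1,1)`, in which case `Ξ_1(m)` has exactly the
two vertices `e_1, e_2` and no arrows. -/
theorem stmt_6 (r : ℕ) (hr : 2 ≤ r) (m : Fin r → ℕ) (hm : ∀ i, 1 ≤ m i) :
    (∀ p q : {x : Fin r → ℕ // xiVert m 0 x},
        Relation.ReflTransGen (fun u v => xiArrow m u.1 v.1 ∨ xiArrow m v.1 u.1) p q) ∧
      (¬(r = 2 ∧ ∀ i, m i = 1) →
        ∀ p q : {x : Fin r → ℕ // xiVert m 1 x},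
          Relation.ReflTransGen (fun u v => xiArrow m u.1 v.1 ∨ xiArrow m v.1 u.1) p q) ∧
      ((r = 2 ∧ ∀ i, m i = 1) →
        (∀ x, xiVert m 1 x ↔
          (x = Pi.single (⟨0, by omega⟩ : Fin r) 1 ∨ x = Pi.single (⟨1, by omega⟩ : Fin r) 1)) ∧
        ∀ x y, xiVert m 1 x → xiVert m 1 y → ¬xiArrow m x y) := by
  have hsymm0 : Symmetric
      (fun u v : {x : Fin r → ℕ // xiVert m 0 x} => xiArrow m u.1 v.1 ∨ xiArrow m v.1 u.1) :=
    fun u v h => h.symm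
  have hsymm1 : Symmetric
      (fun u v : {x : Fin r → ℕ // xiVert m 1 x} => xiArrow m u.1 v.1 ∨ xiArrow m v.1 u.1) :=
    fun u v h => h.symm
  refine ⟨?_, ?_, ?_⟩
  · rintro ⟨x, hx⟩ ⟨x', hx'⟩
    obtain ⟨y, hy, hys, hp⟩ := reach m (by norm_num) hm _ x hx rfl
    obtain ⟨z, hz, hzs, hq⟩ := reach m (by norm_num) hm _ x' hx' rfl
    have hyz : (⟨y, hy⟩ : {x : Fin r → ℕ // xiVert m 0 x}) = ⟨z, hz⟩ := by
      refine Subtype.ext (funext fun t => ?_)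
      have h1 := (Finset.sum_eq_zero_iff.mp hys) t (Finset.mem_univ t)
      have h2 := (Finset.sum_eq_zero_iff.mp hzs) t (Finset.mem_univ t)
      show y t = z t
      rw [h1, h2]
    exact hp.trans (hyz ▸ ((@Relation.ReflTransGen.stdSymm _ _ ⟨hsymm0⟩).symm _ _ hq))
  · intro hne
    rintro ⟨x, hx⟩ ⟨x', hx'⟩
    obtain ⟨y, hy, hys, hp⟩ := reach m (by norm_num) hm _ x hx rfl
    obtain ⟨z, hz, hzs, hq⟩ := reach m (by norm_num) hm _ x' hx' rfl
    obtain ⟨i, rfl⟩ := eq_single_of_sum_one y hys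
    obtain ⟨j, rfl⟩ := eq_single_of_sum_one z hzs
    have hq' := (@Relation.ReflTransGen.stdSymm _ _ ⟨hsymm1⟩).symm _ _ hq
    by_cases hij : i = j
    · subst hij
      exact hp.trans ((Subtype.ext rfl :
        (⟨Pi.single i 1, hy⟩ : {x : Fin r → ℕ // xiVert m 1 x}) = ⟨Pi.single i 1, hz⟩) ▸ hq')
    · have hmid : Relation.ReflTransGen
          (fun u v : {x : Fin r → ℕ // xiVert m 1 x} => xiArrow m u.1 v.1 ∨ xiArrow m v.1 u.1)
          ⟨Pi.single i 1, single_vert m hm i⟩ ⟨Pi.single j 1, single_vert m hm j⟩ := by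
        by_cases h3 : 3 ≤ r
        · have hk : ∃ k : Fin r, k ≠ i ∧ k ≠ j := by
            by_contra h; push_neg at h
            have hsub : (Finset.univ : Finset (Fin r)) ⊆ {i, j} := by
              intro k _
              by_cases hk : k = i
              · simp [hk]
              · simp [h k hk]
            have hcard := Finset.card_le_card hsub
            have hc2 : ({i, j} : Finset (Fin r)).card ≤ 2 := by
              refine le_trans (Finset.card_insert_le i {j}) ?_
              simp
            rw [Finset.card_univ, Fintype.card_fin] at hcard
            omega
          obtain ⟨k, hki, hkj⟩ := hk
          exact conn_three m hm hij (Ne.symm hki) (Ne.symm hkj)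
        · have hr2 : r = 2 := by omega
          have hex : ∃ t, m t ≠ 1 := by
            by_contra h; push_neg at h
            exact hne ⟨hr2, h⟩
          obtain ⟨t, ht⟩ := hex
          have ht2 : 2 ≤ m t := by have := hm t; omega
          have hvij : (i : ℕ) ≠ (j : ℕ) := fun h => hij (Fin.ext h)
          have htij : t = i ∨ t = j := by
            have h1 := t.isLt; have h2 := i.isLt; have h3' := j.isLt
            have hv : (t : ℕ) = i ∨ (t : ℕ) = j := by omega
            rcases hv with h | h
            · exact Or.inl (Fin.ext h)
            · exact Or.inr (Fin.ext h)
          rcases htij with rfl | rfl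
          · exact conn_two m hm hij ht2
          · exact (@Relation.ReflTransGen.stdSymm _ _ ⟨hsymm1⟩).symm _ _ (conn_two m hm (Ne.symm hij) ht2)
      exact hp.trans (hmid.trans hq')
  · rintro ⟨hr2, hm1⟩
    subst hr2
    constructor
    · intro x
      constructor
      · rintro ⟨hle, hpar⟩
        have h0 := hle 0
        have h1 := hle 1
        rw [hm1 0] at h0
        rw [hm1 1] at h1
        rw [Fin.sum_univ_two] at hpar
        have hcases : (x 0 = 1 ∧ x 1 = 0) ∨ (x 0 = 0 ∧ x 1 = 1) := by omega
        rcases hcases with ⟨ha, hb⟩ | ⟨ha, hb⟩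
        · left
          funext t
          fin_cases t <;> simp [Pi.single_apply] <;> first
            | exact ha | exact hb
        · right
          funext t
          fin_cases t <;> simp [Pi.single_apply] <;> first
            | exact ha | exact hb
      · rintro (rfl | rfl) <;> exact single_vert m hm _
    · rintro x y hx hy (⟨j, hj, -⟩ | ⟨i, j, hij, hi, hj, -⟩)
      · rw [hm1 j] at hj; omega
      · have hiv : (i : ℕ) < (j : ℕ) := hij
        have hjl := j.isLt
        have hi0 : i = 0 := Fin.ext (by omega)
        have hj1 : j = 1 := Fin.ext (by omega)
        subst hi0; subst hj1
        rw [hm1 0] at hi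
        rw [hm1 1] at hj
        have := hx.2
        rw [Fin.sum_univ_two] at this
        omega
end

section
/- Let m ∈ ℤ_{>0}^r be a weakly decreasing tuple of positive integers with r ≥ 2. Then Ξ_0(m) is isomorphic to the opposite quiver of Ξ_1(m) if and only if |m| = m_1 + ⋯ + m_r is odd. -/
lemma xiArrow_flip {r : ℕ} (m u v : Fin r → ℕ) (h : xiArrow m u v) :
    xiArrow m (m - v) (m - u) := by
  rcases h with ⟨j, hj, rfl⟩ | ⟨i, j, hij, hi, hj, rfl⟩
  · refine Or.inl ⟨j, ?_, funext fun t => ?_⟩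
    · simp only [Pi.sub_apply, Pi.add_apply, Pi.single_eq_same]
      omega
    · by_cases htj : t = j
      · subst htj
        simp only [Pi.sub_apply, Pi.add_apply, Pi.single_eq_same]
        omega
      · simp [Pi.single_eq_of_ne htj]
  · have hij' : i ≠ j := ne_of_lt hij
    refine Or.inr ⟨i, j, hij, ?_, ?_, funext fun t => ?_⟩
    · simp only [Pi.sub_apply, Pi.add_apply, Pi.single_eq_same,
        Pi.single_eq_of_ne hij'.symm, Pi.single_eq_of_ne hij']
      omega
    · simp only [Pi.sub_apply, Pi.add_apply, Pi.single_eq_same,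
        Pi.single_eq_of_ne hij'.symm, Pi.single_eq_of_ne hij']
      omega
    · by_cases hti : t = i
      · subst hti
        simp only [Pi.sub_apply, Pi.add_apply, Pi.single_eq_same,
          Pi.single_eq_of_ne hij', Pi.single_eq_of_ne hij'.symm]
        omega
      · by_cases htj : t = j
        · subst htj
          simp only [Pi.sub_apply, Pi.add_apply, Pi.single_eq_same,
            Pi.single_eq_of_ne hij', Pi.single_eq_of_ne hij'.symm]
          omega
        · simp [Pi.single_eq_of_ne hti, Pi.single_eq_of_ne htj]

/-- for a weakly decreasing positive tuple `m` of length `r ≥ 2`, the quiver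
`Ξ_0(m)` is isomorphic to the opposite quiver of `Ξ_1(m)` if and only if `|m|` is odd. -/
theorem stmt_8 (r : ℕ) (hr : 2 ≤ r) (m : Fin r → ℕ) (hm : ∀ i, 1 ≤ m i)
    (hdec : ∀ i j : Fin r, i ≤ j → m j ≤ m i) :
    (∃ F : {x : Fin r → ℕ // xiVert m 0 x} ≃ {x : Fin r → ℕ // xiVert m 1 x},
        ∀ u v, xiArrow m u.1 v.1 ↔ xiArrow m (F v).1 (F u).1) ↔
      (∑ i, m i) % 2 = 1 := by
  constructor
  · rintro ⟨F, hF⟩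
    by_contra hpar
    have hpar0 : (∑ i, m i) % 2 = 0 := by omega
    -- the two special vertices m - e_k of Ξ₁
    have hz : ∀ k : Fin r, xiVert m 1 (m - (Pi.single k 1 : Fin r → ℕ)) := by
      intro k
      refine ⟨fun i => Nat.sub_le _ _, ?_⟩
      have h1 : ∑ i, (m - (Pi.single k 1 : Fin r → ℕ)) i
          + ∑ i, (Pi.single k 1 : Fin r → ℕ) i = ∑ i, m i := by
        rw [← Finset.sum_add_distrib]
        refine Finset.sum_congr rfl fun i _ => Nat.sub_add_cancel ?_
        by_cases h : i = k
        · subst h; simpa using hm i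
        · simp [Pi.single_eq_of_ne h]
      have h2 : ∑ i, (Pi.single k 1 : Fin r → ℕ) i = 1 := by
        simp [Finset.sum_pi_single]
      omega
    -- no arrows out of m - e_k (as first argument)
    have hQ : ∀ (k : Fin r) (w : Fin r → ℕ),
        ¬ xiArrow m (m - (Pi.single k 1 : Fin r → ℕ)) w := by
      rintro k w (⟨j, hj, -⟩ | ⟨i, j, hij, hi, hj, -⟩)
      · have h1 : (Pi.single k 1 : Fin r → ℕ) j ≤ 1 := by
          by_cases h : j = k
          · subst h; simp
          · simp [Pi.single_eq_of_ne h]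
        simp only [Pi.sub_apply] at hj
        omega
      · have hik : i = k := by
          by_contra h
          simp only [Pi.sub_apply, Pi.single_eq_of_ne h] at hi
          omega
        have hjk : j = k := by
          by_contra h
          simp only [Pi.sub_apply, Pi.single_eq_of_ne h] at hj
          omega
        exact absurd (hik.trans hjk.symm) (ne_of_lt hij)
    -- vertices of Ξ₀ with no incoming arrows (as second argument) must be 0
    have hP : ∀ u : Fin r → ℕ, xiVert m 0 u →
        (∀ v, xiVert m 0 v → ¬ xiArrow m v u) → u = 0 := by
      intro u hu hno
      by_contra hne
      obtain ⟨j, hj⟩ : ∃ j, 1 ≤ u j := by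
        by_contra h
        push_neg at h
        refine hne (funext fun i => ?_)
        have := h i
        simp only [Pi.zero_apply]
        omega
      have harr : ∀ p q : Fin r, p < q → 1 ≤ u p → 1 ≤ u q → False := by
        intro p q hpq hp hq
        have hpq' : p ≠ q := ne_of_lt hpq
        set v : Fin r → ℕ :=
          u - (Pi.single p 1 : Fin r → ℕ) - (Pi.single q 1 : Fin r → ℕ) with hvdef
        have heq : u = v + (Pi.single p 1 : Fin r → ℕ) + (Pi.single q 1 : Fin r → ℕ) := by
          funext t
          by_cases htp : t = p
          · subst htp
            simp only [hvdef, Pi.add_apply, Pi.sub_apply, Pi.single_eq_same,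
              Pi.single_eq_of_ne hpq', Pi.single_eq_of_ne hpq'.symm]
            omega
          · by_cases htq : t = q
            · subst htq
              simp only [hvdef, Pi.add_apply, Pi.sub_apply, Pi.single_eq_same,
                Pi.single_eq_of_ne hpq', Pi.single_eq_of_ne hpq'.symm]
              omega
            · simp [hvdef, Pi.single_eq_of_ne htp, Pi.single_eq_of_ne htq]
        refine hno v ⟨?_, ?_⟩ (Or.inr ⟨p, q, hpq, ?_, ?_, heq⟩)
        · intro i
          exact le_trans (le_trans (Nat.sub_le _ _) (Nat.sub_le _ _)) (hu.1 i)
        · have hs : ∑ t, (v + (Pi.single p 1 : Fin r → ℕ)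
              + (Pi.single q 1 : Fin r → ℕ)) t = ∑ t, v t + 2 := by
            simp only [Pi.add_apply]
            rw [Finset.sum_add_distrib, Finset.sum_add_distrib]
            simp [Finset.sum_pi_single]
          have h2 := hu.2
          rw [heq, hs] at h2
          omega
        · simp only [hvdef, Pi.sub_apply, Pi.single_eq_same,
            Pi.single_eq_of_ne hpq', Pi.single_eq_of_ne hpq'.symm]
          have := hu.1 p
          omega
        · simp only [hvdef, Pi.sub_apply, Pi.single_eq_same,
            Pi.single_eq_of_ne hpq', Pi.single_eq_of_ne hpq'.symm]
          have := hu.1 q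
          omega
      by_cases h2 : 2 ≤ u j
      · -- diagonal arrow into u
        set v : Fin r → ℕ := u - (Pi.single j 2 : Fin r → ℕ) with hvdef
        have heq : u = v + (Pi.single j 2 : Fin r → ℕ) := by
          funext t
          by_cases htj : t = j
          · subst htj
            simp only [hvdef, Pi.add_apply, Pi.sub_apply, Pi.single_eq_same]
            omega
          · simp [hvdef, Pi.single_eq_of_ne htj]
        refine hno v ⟨?_, ?_⟩ (Or.inl ⟨j, ?_, heq⟩)
        · intro i; exact le_trans (Nat.sub_le _ _) (hu.1 i)
        · have hs : ∑ t, (v + (Pi.single j 2 : Fin r → ℕ)) t = ∑ t, v t + 2 := by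
            simp only [Pi.add_apply]
            rw [Finset.sum_add_distrib]
            simp [Finset.sum_pi_single]
          have hsum := hu.2
          rw [heq, hs] at hsum
          omega
        · simp only [hvdef, Pi.sub_apply, Pi.single_eq_same]
          have := hu.1 j
          omega
      · -- u j = 1; there must be another positive coordinate
        obtain ⟨i, hij, hi⟩ : ∃ i, i ≠ j ∧ 1 ≤ u i := by
          by_contra h
          push_neg at h
          have hsum : ∑ t, u t = u j := by
            refine Finset.sum_eq_single j (fun t _ ht => ?_) (by simp)
            have := h t ht
            omega
          have := hu.2
          rw [hsum] at this
          omega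
        rcases lt_or_gt_of_ne hij with h | h
        · exact harr i j h hi hj
        · exact harr j i h hj hi
    -- apply to k = 0 and k = 1
    have key : ∀ k : Fin r, (F.symm ⟨m - (Pi.single k 1 : Fin r → ℕ), hz k⟩).1 = 0 := by
      intro k
      apply hP _ (F.symm ⟨m - (Pi.single k 1 : Fin r → ℕ), hz k⟩).2
      intro v hv hvu
      have := (hF ⟨v, hv⟩ (F.symm ⟨m - (Pi.single k 1 : Fin r → ℕ), hz k⟩)).1 hvu
      rw [Equiv.apply_symm_apply] at this
      exact hQ k _ this
    have h0r : 0 < r := by omega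
    have h1r : 1 < r := by omega
    have hne : (⟨0, h0r⟩ : Fin r) ≠ ⟨1, h1r⟩ := by
      simp [Fin.ext_iff]
    have heq : (F.symm ⟨m - (Pi.single (⟨0, h0r⟩ : Fin r) 1 : Fin r → ℕ), hz _⟩) =
        (F.symm ⟨m - (Pi.single (⟨1, h1r⟩ : Fin r) 1 : Fin r → ℕ), hz _⟩) :=
      Subtype.ext (by rw [key, key])
    have hzz : m - (Pi.single (⟨0, h0r⟩ : Fin r) 1 : Fin r → ℕ) =
        m - (Pi.single (⟨1, h1r⟩ : Fin r) 1 : Fin r → ℕ) := by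
      have := F.symm.injective heq
      exact congrArg Subtype.val this
    have hval := congrFun hzz ⟨0, h0r⟩
    simp only [Pi.sub_apply, Pi.single_eq_same, Pi.single_eq_of_ne hne] at hval
    have hm0 := hm (⟨0, h0r⟩ : Fin r)
    omega
  · intro hpar
    have hsub : ∀ x : Fin r → ℕ, (∀ i, x i ≤ m i) → ∀ a b : ℕ, b ≤ 1 →
        (∑ i, x i) % 2 = a → (a + b) % 2 = 1 → xiVert m b (m - x) := by
      intro x hx a b hb ha hab
      refine ⟨fun i => Nat.sub_le _ _, ?_⟩
      have h1 : ∑ i, (m - x) i + ∑ i, x i = ∑ i, m i := by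
        rw [← Finset.sum_add_distrib]
        exact Finset.sum_congr rfl fun i _ => Nat.sub_add_cancel (hx i)
      omega
    refine ⟨⟨fun x => ⟨m - x.1, hsub x.1 x.2.1 0 1 (by norm_num) x.2.2 rfl⟩,
        fun y => ⟨m - y.1, hsub y.1 y.2.1 1 0 (by norm_num) y.2.2 rfl⟩, ?_, ?_⟩, ?_⟩
    · intro x
      exact Subtype.ext (funext fun i => Nat.sub_sub_self (x.2.1 i))
    · intro y
      exact Subtype.ext (funext fun i => Nat.sub_sub_self (y.2.1 i))
    · intro u v
      show xiArrow m u.1 v.1 ↔ xiArrow m (m - v.1) (m - u.1)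
      constructor
      · exact xiArrow_flip m u.1 v.1
      · intro h
        have h2 := xiArrow_flip m _ _ h
        have hu : m - (m - u.1) = u.1 := funext fun i => Nat.sub_sub_self (u.2.1 i)
        have hv : m - (m - v.1) = v.1 := funext fun i => Nat.sub_sub_self (v.2.1 i)
        rwa [hu, hv] at h2
end

section
/- A subset Ψ ⊆ R^+ of the positive roots of type C_ℓ is extremal if and only if there exist k ≥ 1 and indices 1 ≤ i_1 < ⋯ < i_k ≤ ℓ such that Ψ = {ε_{i_r} + ε_{i_s} : 1 ≤ r ≤ s ≤ k} (where ε_i + ε_i = 2ε_i). In particular, no extremal subset of R^+ contains a root of the form ε_a − ε_b. -/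
open RealInnerProductSpace

/-- The standard basis vector `ε_a` of `ℝ^ℓ`. -/
noncomputable def epsC (ℓ : ℕ) (a : Fin ℓ) : EuclideanSpace ℝ (Fin ℓ) :=
  EuclideanSpace.single a 1

/-- The root system of type `C_ℓ` : `{±ε_a ± ε_b : a < b} ∪ {±2ε_a}`. -/
def RrootC (ℓ : ℕ) : Set (EuclideanSpace ℝ (Fin ℓ)) :=
  {v | (∃ a b : Fin ℓ, a < b ∧
        (v = epsC ℓ a + epsC ℓ b ∨ v = epsC ℓ a - epsC ℓ b ∨
          v = -epsC ℓ a + epsC ℓ b ∨ v = -epsC ℓ a - epsC ℓ b)) ∨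
    ∃ a : Fin ℓ, v = (2 : ℝ) • epsC ℓ a ∨ v = -((2 : ℝ) • epsC ℓ a)}

/-- The positive roots of type `C_ℓ` :
`{ε_a − ε_b, ε_a + ε_b : a < b} ∪ {2ε_a}`. -/
def RposC (ℓ : ℕ) : Set (EuclideanSpace ℝ (Fin ℓ)) :=
  {v | (∃ a b : Fin ℓ, a < b ∧ (v = epsC ℓ a - epsC ℓ b ∨ v = epsC ℓ a + epsC ℓ b)) ∨
    ∃ a : Fin ℓ, v = (2 : ℝ) • epsC ℓ a}

/-- `Ψ ⊆ R` is extremal if it is the set of roots on which the pairing with some `ξ` is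
maximal among all roots. -/
def IsExtremalC (ℓ : ℕ) (Ψ : Set (EuclideanSpace ℝ (Fin ℓ))) : Prop :=
  ∃ ξ : EuclideanSpace ℝ (Fin ℓ),
    Ψ = {α | α ∈ RrootC ℓ ∧ ∀ β ∈ RrootC ℓ, ⟪ξ, β⟫ ≤ ⟪ξ, α⟫}

lemma innerEps {ℓ : ℕ} (ξ : EuclideanSpace ℝ (Fin ℓ)) (a : Fin ℓ) :
    ⟪ξ, epsC ℓ a⟫ = ξ a := by simp [epsC, EuclideanSpace.inner_single_right]

lemma rootBound {ℓ : ℕ} (ξ : EuclideanSpace ℝ (Fin ℓ)) (m : ℝ)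
    (habs : ∀ a, |ξ a| ≤ m) : ∀ β ∈ RrootC ℓ, ⟪ξ, β⟫ ≤ 2 * m := by
  rintro β (⟨a, b, hab, (rfl | rfl | rfl | rfl)⟩ | ⟨a, (rfl | rfl)⟩) <;>
  · have ha := abs_le.mp (habs a)
    try have hb := abs_le.mp (habs b)
    simp only [inner_add_right, inner_sub_right, inner_neg_right,
      real_inner_smul_right, innerEps]
    linarith

lemma argmaxChar {ℓ : ℕ} (ξ : EuclideanSpace ℝ (Fin ℓ)) (m : ℝ)
    (habs : ∀ a, |ξ a| ≤ m) (hne : ∀ a, ξ a ≠ -m) (a0 : Fin ℓ) (h0 : ξ a0 = m) :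
    {α | α ∈ RrootC ℓ ∧ ∀ β ∈ RrootC ℓ, ⟪ξ, β⟫ ≤ ⟪ξ, α⟫}
      = {v | ∃ a b : Fin ℓ, ξ a = m ∧ ξ b = m ∧ a ≤ b ∧ v = epsC ℓ a + epsC ℓ b} := by
  have hb2 := rootBound ξ m habs
  have hmem0 : (2 : ℝ) • epsC ℓ a0 ∈ RrootC ℓ := Or.inr ⟨a0, Or.inl rfl⟩
  have hin0 : ⟪ξ, (2 : ℝ) • epsC ℓ a0⟫ = 2 * m := by
    rw [real_inner_smul_right, innerEps, h0]
  ext v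
  constructor
  · rintro ⟨hv, hmax⟩
    have hv2 : ⟪ξ, v⟫ = 2 * m := le_antisymm (hb2 v hv) (hin0 ▸ hmax _ hmem0)
    rcases hv with ⟨a, b, hab, (rfl | rfl | rfl | rfl)⟩ | ⟨a, (rfl | rfl)⟩
    · simp only [inner_add_right, innerEps] at hv2
      have ha := abs_le.mp (habs a); have hb := abs_le.mp (habs b)
      exact ⟨a, b, by linarith, by linarith, hab.le, rfl⟩
    · simp only [inner_sub_right, innerEps] at hv2
      have ha := abs_le.mp (habs a); have hb := abs_le.mp (habs b)
      exact absurd (by linarith : ξ b = -m) (hne b)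
    · simp only [inner_add_right, inner_neg_right, innerEps] at hv2
      have ha := abs_le.mp (habs a); have hb := abs_le.mp (habs b)
      exact absurd (by linarith : ξ a = -m) (hne a)
    · simp only [inner_sub_right, inner_neg_right, innerEps] at hv2
      have ha := abs_le.mp (habs a); have hb := abs_le.mp (habs b)
      exact absurd (by linarith : ξ a = -m) (hne a)
    · simp only [real_inner_smul_right, innerEps] at hv2
      exact ⟨a, a, by linarith, by linarith, le_refl a, two_smul ℝ _⟩
    · simp only [inner_neg_right, real_inner_smul_right, innerEps] at hv2
      exact absurd (by linarith : ξ a = -m) (hne a)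
  · rintro ⟨a, b, ha, hbq, hab, rfl⟩
    have hmem : epsC ℓ a + epsC ℓ b ∈ RrootC ℓ := by
      rcases lt_or_eq_of_le hab with h | rfl
      · exact Or.inl ⟨a, b, h, Or.inl rfl⟩
      · exact Or.inr ⟨a, Or.inl (two_smul ℝ (epsC ℓ a)).symm⟩
    refine ⟨hmem, fun β hβ => ?_⟩
    have := hb2 β hβ
    simp only [inner_add_right, innerEps, ha, hbq]
    linarith

lemma neg2eps_not_pos {ℓ : ℕ} (a : Fin ℓ) : -((2 : ℝ) • epsC ℓ a) ∉ RposC ℓ := by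
  rintro (⟨c, d, hcd, (h | h)⟩ | ⟨c, h⟩)
  · have h2 := congrArg (fun w : EuclideanSpace ℝ (Fin ℓ) => w c) h
    simp [epsC, EuclideanSpace.single_apply, hcd.ne] at h2
    split_ifs at h2 <;> norm_num at h2
  · have h2 := congrArg (fun w : EuclideanSpace ℝ (Fin ℓ) => w c) h
    simp [epsC, EuclideanSpace.single_apply, hcd.ne] at h2
    split_ifs at h2 <;> norm_num at h2
  · have h2 := congrArg (fun w : EuclideanSpace ℝ (Fin ℓ) => w c) h
    simp [epsC, EuclideanSpace.single_apply] at h2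
    split_ifs at h2 <;> norm_num at h2

/-- a subset `Ψ ⊆ R⁺` of the positive roots of type `C_ℓ` is extremal iff
`Ψ = {ε_{i_r} + ε_{i_s} : 1 ≤ r ≤ s ≤ k}` for some `1 ≤ i_1 < ⋯ < i_k ≤ ℓ`; in particular
no extremal subset of `R⁺` contains a root of the form `ε_a − ε_b`. -/
theorem stmt_11 (ℓ : ℕ) (hℓ : 2 ≤ ℓ)
    (Ψ : Set (EuclideanSpace ℝ (Fin ℓ))) (hsub : Ψ ⊆ RposC ℓ) :
    (IsExtremalC ℓ Ψ ↔
      ∃ k : ℕ, 1 ≤ k ∧ ∃ ii : Fin k → Fin ℓ, StrictMono ii ∧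
        Ψ = {v | ∃ p q : Fin k, p ≤ q ∧ v = epsC ℓ (ii p) + epsC ℓ (ii q)}) ∧
    (IsExtremalC ℓ Ψ → ∀ a b : Fin ℓ, epsC ℓ a - epsC ℓ b ∉ Ψ) := by
  classical
  have main : IsExtremalC ℓ Ψ ↔
      ∃ k : ℕ, 1 ≤ k ∧ ∃ ii : Fin k → Fin ℓ, StrictMono ii ∧
        Ψ = {v | ∃ p q : Fin k, p ≤ q ∧ v = epsC ℓ (ii p) + epsC ℓ (ii q)} := by
    constructor
    · rintro ⟨ξ, hΨ⟩
      have hun : (Finset.univ : Finset (Fin ℓ)).Nonempty :=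
        ⟨⟨0, by omega⟩, Finset.mem_univ _⟩
      obtain ⟨a0, -, h0⟩ := Finset.exists_max_image Finset.univ (fun a => |ξ a|) hun
      set m := |ξ a0| with hm
      have habs : ∀ a, |ξ a| ≤ m := fun a => h0 a (Finset.mem_univ a)
      have hne : ∀ a, ξ a ≠ -m := by
        intro a ha
        have hmem : -((2 : ℝ) • epsC ℓ a) ∈ Ψ := by
          rw [hΨ]
          refine ⟨Or.inr ⟨a, Or.inr rfl⟩, fun β hβ => ?_⟩
          have := rootBound ξ m habs β hβ
          simp only [inner_neg_right, real_inner_smul_right, innerEps, ha]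
          linarith
        exact neg2eps_not_pos a (hsub hmem)
      have h0' : ξ a0 = m := by
        rcases abs_cases (ξ a0) with ⟨h, _⟩ | ⟨h, _⟩
        · rw [hm, h]
        · exact absurd (by rw [hm, h]; ring : ξ a0 = -m) (hne a0)
      rw [argmaxChar ξ m habs hne a0 h0'] at hΨ
      set S : Finset (Fin ℓ) := Finset.univ.filter (fun a => ξ a = m) with hS
      have hmemS : ∀ a, a ∈ S ↔ ξ a = m := by
        intro a; simp [hS]
      have hkpos : 1 ≤ S.card := Finset.card_pos.mpr ⟨a0, (hmemS a0).mpr h0'⟩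
      have hrange : ∀ a : Fin ℓ, ξ a = m → ∃ p : Fin S.card, S.orderEmbOfFin rfl p = a := by
        intro a ha
        have : a ∈ Set.range (S.orderEmbOfFin rfl) := by
          rw [Finset.range_orderEmbOfFin]
          exact Finset.mem_coe.mpr ((hmemS a).mpr ha)
        exact this
      refine ⟨S.card, hkpos, fun p => S.orderEmbOfFin rfl p,
        (S.orderEmbOfFin rfl).strictMono, ?_⟩
      rw [hΨ]; ext v
      constructor
      · rintro ⟨a, b, ha, hbq, hab, rfl⟩
        obtain ⟨p, hp⟩ := hrange a ha
        obtain ⟨q, hq⟩ := hrange b hbq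
        refine ⟨p, q, (S.orderEmbOfFin rfl).le_iff_le.mp (by rw [hp, hq]; exact hab), ?_⟩
        show epsC ℓ a + epsC ℓ b
          = epsC ℓ (S.orderEmbOfFin rfl p) + epsC ℓ (S.orderEmbOfFin rfl q)
        rw [hp, hq]
      · rintro ⟨p, q, hpq, rfl⟩
        exact ⟨_, _, (hmemS _).mp (Finset.orderEmbOfFin_mem S rfl p),
          (hmemS _).mp (Finset.orderEmbOfFin_mem S rfl q),
          (S.orderEmbOfFin rfl).monotone hpq, rfl⟩
    · rintro ⟨k, hk, ii, hmono, hΨ⟩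
      set ξ : EuclideanSpace ℝ (Fin ℓ) :=
        (WithLp.toLp 2 (fun a => if a ∈ Set.range ii then (1 : ℝ) else 0) : EuclideanSpace ℝ (Fin ℓ))
        with hξ
      have hcoord : ∀ a, ξ a = if a ∈ Set.range ii then (1 : ℝ) else 0 := fun a => rfl
      have habs : ∀ a, |ξ a| ≤ 1 := by
        intro a; rw [hcoord]; split_ifs <;> norm_num
      have hne : ∀ a, ξ a ≠ -1 := by
        intro a; rw [hcoord]; split_ifs <;> norm_num
      have h0 : ξ (ii ⟨0, hk⟩) = 1 := by
        rw [hcoord, if_pos ⟨⟨0, hk⟩, rfl⟩]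
      refine ⟨ξ, ?_⟩
      rw [argmaxChar ξ 1 habs hne (ii ⟨0, hk⟩) h0, hΨ]
      ext v
      constructor
      · rintro ⟨p, q, hpq, rfl⟩
        exact ⟨ii p, ii q, by rw [hcoord, if_pos ⟨p, rfl⟩],
          by rw [hcoord, if_pos ⟨q, rfl⟩], hmono.monotone hpq, rfl⟩
      · rintro ⟨a, b, ha, hbq, hab, rfl⟩
        have hra : a ∈ Set.range ii := by
          by_contra h; rw [hcoord, if_neg h] at ha; norm_num at ha
        have hrb : b ∈ Set.range ii := by
          by_contra h; rw [hcoord, if_neg h] at hbq; norm_num at hbq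
        obtain ⟨p, hp⟩ := hra
        obtain ⟨q, hq⟩ := hrb
        refine ⟨p, q, hmono.le_iff_le.mp (by rw [hp, hq]; exact hab), by rw [hp, hq]⟩
  refine ⟨main, fun hE a b hmem => ?_⟩
  obtain ⟨k, hk, ii, hmono, hΨ⟩ := main.mp hE
  rw [hΨ] at hmem
  obtain ⟨p, q, hpq, heq⟩ := hmem
  rcases eq_or_ne a b with rfl | hab
  · have h2 := congrArg (fun w : EuclideanSpace ℝ (Fin ℓ) => w (ii p)) heq
    simp only [epsC] at h2
    simp [EuclideanSpace.single_apply] at h2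
    split_ifs at h2 <;> norm_num at h2
  · have h2 := congrArg (fun w : EuclideanSpace ℝ (Fin ℓ) => w b) heq
    have hba : b ≠ a := Ne.symm hab
    simp only [epsC] at h2
    simp [EuclideanSpace.single_apply, hba] at h2
    split_ifs at h2 <;> norm_num at h2
end

section
/- Fix ℓ ≥ 2 and 1 ≤ i_1 < ⋯ < i_k ≤ ℓ, and let Ψ = Ψ(i_1,…,i_k) with associated quiver Δ_Ψ on ℕ^ℓ. Then Ψ is regular if and only if i_{r+1} ≠ i_r + 1 for all 1 ≤ r < k. -/
/-- The coordinates of the type `C_ℓ` root `β_{i,j}` (`1 ≤ i ≤ j ≤ ℓ`, `1`-based positions)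
with respect to the fundamental weights: the `t`-th coordinate is the multiplicity of `t` in
the multiset `{i, j}` minus its multiplicity in the multiset `{i−1, j−1}`. -/
def betaC (ℓ i j : ℕ) : Fin ℓ → ℤ := fun t =>
  (if (t : ℕ) + 1 = i then 1 else 0) + (if (t : ℕ) + 1 = j then 1 else 0)
    - (if (t : ℕ) + 2 = i then 1 else 0) - (if (t : ℕ) + 2 = j then 1 else 0)

/-- The arrow relation of the quiver `Δ_Ψ` on `ℕ^ℓ`, for `Ψ` given by a set `S` of index
pairs `(i, j)`, `i ≤ j` : for `i < j` an arrow `λ ← λ + β_{i,j}` whenever `λ_{i−1} ≥ 1`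
(no condition when `i = 1`) and `λ_{j−1} ≥ 1`; for `i = j` an arrow `λ ← λ + β_{i,i}`
whenever `λ_{i−1} ≥ 2` (no condition when `i = 1`). -/
def arrowC (ℓ : ℕ) (S : Set (ℕ × ℕ)) (lam mu : Fin ℓ → ℕ) : Prop :=
  ∃ p ∈ S, (∀ t : Fin ℓ, (mu t : ℤ) = (lam t : ℤ) + betaC ℓ p.1 p.2 t) ∧
    (if p.1 = p.2 then ∀ t : Fin ℓ, (t : ℕ) + 2 = p.1 → 2 ≤ lam t
     else (∀ t : Fin ℓ, (t : ℕ) + 2 = p.1 → 1 ≤ lam t) ∧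
       (∀ t : Fin ℓ, (t : ℕ) + 2 = p.2 → 1 ≤ lam t))

/-- `t_{λ,η}` : the number of `μ ∈ ℕ^ℓ` such that both `λ ← μ` and `μ ← λ + η` are arrows. -/
noncomputable def tCount (ℓ : ℕ) (S : Set (ℕ × ℕ)) (lam : Fin ℓ → ℕ) (η : Fin ℓ → ℤ) : ℕ :=
  Nat.card {mu : Fin ℓ → ℕ | arrowC ℓ S lam mu ∧
    ∃ nu : Fin ℓ → ℕ, (∀ t, (nu t : ℤ) = (lam t : ℤ) + η t) ∧ arrowC ℓ S mu nu}

/-- `m_η` : the number of ordered pairs `(β, β') ∈ Ψ × Ψ` of roots with `β + β' = η`. -/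
noncomputable def mCount (ℓ : ℕ) (Ψv : Set (Fin ℓ → ℤ)) (η : Fin ℓ → ℤ) : ℕ :=
  Nat.card {bb : (Fin ℓ → ℤ) × (Fin ℓ → ℤ) | bb.1 ∈ Ψv ∧ bb.2 ∈ Ψv ∧ bb.1 + bb.2 = η}

lemma betaC_pos {ℓ a b v : ℕ} {t : Fin ℓ} (ht : (t:ℕ) + 1 = v)
    (ha : a ≠ v + 1) (hb : b ≠ v + 1) :
    betaC ℓ a b t = (if v = a then 1 else 0) + (if v = b then 1 else 0) := by
  simp only [betaC]; split_ifs <;> omega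

lemma betaC_neg {ℓ a b v : ℕ} {t : Fin ℓ} (ht : (t:ℕ) + 2 = v)
    (ha : a + 1 ≠ v) (hb : b + 1 ≠ v) :
    betaC ℓ a b t = -(if v = a then 1 else 0) - (if v = b then 1 else 0) := by
  simp only [betaC]; split_ifs <;> omega

lemma img_sub (ℓ k : ℕ) (ii : Fin k → ℕ) (lam : Fin ℓ → ℕ) (η : Fin ℓ → ℤ) :
    (fun μ : Fin ℓ → ℕ =>
        ((fun t => (μ t : ℤ) - lam t, fun t => η t - ((μ t : ℤ) - lam t)) :
          (Fin ℓ → ℤ) × (Fin ℓ → ℤ))) ''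
      {mu | arrowC ℓ {pq | ∃ p q : Fin k, p ≤ q ∧ pq = (ii p, ii q)} lam mu ∧
        ∃ nu : Fin ℓ → ℕ, (∀ t, (nu t : ℤ) = (lam t : ℤ) + η t) ∧
          arrowC ℓ {pq | ∃ p q : Fin k, p ≤ q ∧ pq = (ii p, ii q)} mu nu}
      ⊆ {bb : (Fin ℓ → ℤ) × (Fin ℓ → ℤ) |
          bb.1 ∈ {v | ∃ p q : Fin k, p ≤ q ∧ v = betaC ℓ (ii p) (ii q)} ∧
          bb.2 ∈ {v | ∃ p q : Fin k, p ≤ q ∧ v = betaC ℓ (ii p) (ii q)} ∧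
          bb.1 + bb.2 = η} := by
  rintro bb ⟨μ, ⟨⟨p', hp'S, hμeq, -⟩, ν', hν', ⟨q', hq'S, hν'eq, -⟩⟩, rfl⟩
  obtain ⟨r1, s1, hrs1, rfl⟩ := hp'S
  obtain ⟨r2, s2, hrs2, rfl⟩ := hq'S
  refine ⟨⟨r1, s1, hrs1, funext fun t => ?_⟩, ⟨r2, s2, hrs2, funext fun t => ?_⟩,
    funext fun t => ?_⟩
  · have := hμeq t; dsimp at this ⊢; linarith
  · have h1 := hν' t; have h2 := hν'eq t; have h3 := hμeq t; dsimp at h1 h2 h3 ⊢; linarith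
  · dsimp [Pi.add_apply]; ring

lemma F_injOn (ℓ : ℕ) (lam : Fin ℓ → ℕ) (η : Fin ℓ → ℤ) :
    Function.Injective (fun μ : Fin ℓ → ℕ =>
        ((fun t => (μ t : ℤ) - lam t, fun t => η t - ((μ t : ℤ) - lam t)) :
          (Fin ℓ → ℤ) × (Fin ℓ → ℤ))) := by
  intro x y h
  funext t
  have := congrFun (congrArg Prod.fst h) t
  dsimp at this
  omega

set_option maxHeartbeats 2000000 in
theorem gap_regular (ℓ k : ℕ) (ii : Fin k → ℕ) (hii : StrictMono ii)
    (h1 : ∀ t, 1 ≤ ii t) (hub : ∀ t, ii t ≤ ℓ)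
    (hgap : ∀ p q : Fin k, p < q → ii p + 2 ≤ ii q)
    (η : Fin ℓ → ℤ) (lam : Fin ℓ → ℕ)
    (hpos : 0 < tCount ℓ {pq | ∃ p q : Fin k, p ≤ q ∧ pq = (ii p, ii q)} lam η) :
    tCount ℓ {pq | ∃ p q : Fin k, p ≤ q ∧ pq = (ii p, ii q)} lam η
      = mCount ℓ {v | ∃ p q : Fin k, p ≤ q ∧ v = betaC ℓ (ii p) (ii q)} η := by
  have noadj : ∀ r s : Fin k, ii r + 1 ≠ ii s := by
    intro r s h
    have hlt : r < s := by
      by_contra hc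
      push_neg at hc
      have := hii.monotone hc
      omega
    have := hgap r s hlt
    omega
  set S : Set (ℕ × ℕ) := {pq | ∃ p q : Fin k, p ≤ q ∧ pq = (ii p, ii q)} with hSdef
  set tset : Set (Fin ℓ → ℕ) := {mu | arrowC ℓ S lam mu ∧
    ∃ nu : Fin ℓ → ℕ, (∀ t, (nu t : ℤ) = (lam t : ℤ) + η t) ∧ arrowC ℓ S mu nu} with htset
  set mset : Set ((Fin ℓ → ℤ) × (Fin ℓ → ℤ)) :=
    {bb | bb.1 ∈ {v | ∃ p q : Fin k, p ≤ q ∧ v = betaC ℓ (ii p) (ii q)} ∧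
      bb.2 ∈ {v | ∃ p q : Fin k, p ≤ q ∧ v = betaC ℓ (ii p) (ii q)} ∧
      bb.1 + bb.2 = η} with hmset
  have htc : tCount ℓ S lam η = tset.ncard := by
    rw [tCount, Nat.card_coe_set_eq]
  have hmc : mCount ℓ {v | ∃ p q : Fin k, p ≤ q ∧ v = betaC ℓ (ii p) (ii q)} η
      = mset.ncard := by
    rw [mCount, Nat.card_coe_set_eq]
  rw [htc, hmc]
  -- extract a witness from positivity
  rw [htc] at hpos
  have hne : tset.Nonempty := Set.nonempty_of_ncard_ne_zero (by omega)
  obtain ⟨μs, ⟨p, hpS, hμeq, hcond1⟩, ν, hν, ⟨q, hqS, hνeq, hcond2⟩⟩ := hne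
  obtain ⟨r1, r2, hr12, rfl⟩ := hpS
  obtain ⟨s1, s2, hs12, rfl⟩ := hqS
  dsimp only at hμeq hνeq hcond1 hcond2
  set a := ii r1 with ha
  set b := ii r2 with hb
  set c := ii s1 with hc
  set d := ii s2 with hd
  set N : ℕ → ℤ := fun v => (if v = a then 1 else 0) + (if v = b then 1 else 0)
    + (if v = c then 1 else 0) + (if v = d then 1 else 0) with hN
  have hηd : ∀ t, η t = betaC ℓ a b t + betaC ℓ c d t := by
    intro t
    have e1 := hν t; have e2 := hνeq t; have e3 := hμeq t
    linarith
  have lamBound : ∀ (r : Fin k) (t : Fin ℓ), (t:ℕ) + 2 = ii r → N (ii r) ≤ (lam t : ℤ) := by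
    intro r t ht
    have hba : betaC ℓ a b t
        = -(if ii r = a then 1 else 0) - (if ii r = b then 1 else 0) :=
      betaC_neg ht (noadj r1 r) (noadj r2 r)
    have c2 : ((if ii r = c then (1:ℤ) else 0) + (if ii r = d then 1 else 0)) ≤ (μs t : ℤ) := by
      by_cases hcd : c = d
      · rw [if_pos hcd] at hcond2
        by_cases hvc : ii r = c
        · have := hcond2 t (by omega)
          split_ifs <;> omega
        · split_ifs <;> omega
      · rw [if_neg hcd] at hcond2
        obtain ⟨cc, cd⟩ := hcond2
        by_cases hvc : ii r = c <;> by_cases hvd : ii r = d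
        · omega
        · have := cc t (by omega); split_ifs <;> omega
        · have := cd t (by omega); split_ifs <;> omega
        · split_ifs <;> omega
    have hμ := hμeq t
    rw [hba] at hμ
    simp only [hN]
    split_ifs at c2 hμ ⊢ <;> omega
  have ηval : ∀ (r : Fin k) (t : Fin ℓ), (t:ℕ) + 1 = ii r → η t = N (ii r) := by
    intro r t ht
    rw [hηd t, betaC_pos ht (Ne.symm (noadj r r1)) (Ne.symm (noadj r r2)),
      betaC_pos ht (Ne.symm (noadj r s1)) (Ne.symm (noadj r s2))]
    simp only [hN]; ring
  -- the bijection
  set F : (Fin ℓ → ℕ) → (Fin ℓ → ℤ) × (Fin ℓ → ℤ) := fun μ =>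
    (fun t => (μ t : ℤ) - lam t, fun t => η t - ((μ t : ℤ) - lam t)) with hF
  have himg : F '' tset = mset := by
    apply Set.Subset.antisymm
    · exact img_sub ℓ k ii lam η
    · rintro ⟨w1, w2⟩ ⟨⟨r1', s1', hrs1', hw1⟩, ⟨r2', s2', hrs2', hw2⟩, hsum⟩
      have hw1' : w1 = betaC ℓ (ii r1') (ii s1') := hw1
      have hw2' : w2 = betaC ℓ (ii r2') (ii s2') := hw2
      have hsum'' : w1 + w2 = η := hsum
      set a' := ii r1' with ha'
      set b' := ii s1' with hb'
      set c' := ii r2' with hc'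
      set d' := ii s2' with hd'
      have hsum' : ∀ t, betaC ℓ a' b' t + betaC ℓ c' d' t = η t := by
        intro t
        have := congrFun hsum t
        rw [hw1, hw2] at this
        exact this
      set N' : ℕ → ℤ := fun v => (if v = a' then 1 else 0) + (if v = b' then 1 else 0)
        + (if v = c' then 1 else 0) + (if v = d' then 1 else 0) with hN'
      have hNN : ∀ r : Fin k, N' (ii r) = N (ii r) := by
        intro r
        have hlt : ii r - 1 < ℓ := by have := hub r; have := h1 r; omega
        have ht : ((⟨ii r - 1, hlt⟩ : Fin ℓ) : ℕ) + 1 = ii r := by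
          have := h1 r; simp; omega
        have e1 := ηval r ⟨ii r - 1, hlt⟩ ht
        have e2 : η ⟨ii r - 1, hlt⟩ = N' (ii r) := by
          rw [← hsum' ⟨ii r - 1, hlt⟩,
            betaC_pos ht (Ne.symm (noadj r r1')) (Ne.symm (noadj r s1')),
            betaC_pos ht (Ne.symm (noadj r r2')) (Ne.symm (noadj r s2'))]
          simp only [hN']; ring
        rw [← e2, e1]
      have key : ∀ (r : Fin k) (t : Fin ℓ), (t:ℕ) + 2 = ii r →
          ((if ii r = c' then (1:ℤ) else 0) + (if ii r = d' then 1 else 0))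
            ≤ (lam t : ℤ) + betaC ℓ a' b' t := by
        intro r t ht
        have hbnd := lamBound r t ht
        have hNr := hNN r
        have hba : betaC ℓ a' b' t
            = -(if ii r = a' then 1 else 0) - (if ii r = b' then 1 else 0) :=
          betaC_neg ht (noadj r1' r) (noadj s1' r)
        rw [hba]
        simp only [hN, hN'] at hbnd hNr
        split_ifs at hbnd hNr ⊢ <;> omega
      have key1 : ∀ (r : Fin k) (t : Fin ℓ), (t:ℕ) + 2 = ii r →
          ((if ii r = a' then (1:ℤ) else 0) + (if ii r = b' then 1 else 0))
            ≤ (lam t : ℤ) := by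
        intro r t ht
        have hbnd := lamBound r t ht
        have hNr := hNN r
        simp only [hN, hN'] at hbnd hNr
        split_ifs at hbnd hNr ⊢ <;> omega
      have nonneg : ∀ t : Fin ℓ, 0 ≤ (lam t : ℤ) + betaC ℓ a' b' t := by
        intro t
        by_cases h1t : (t:ℕ) + 2 = a'
        · have := key r1' t h1t
          split_ifs at this <;> omega
        · by_cases h2t : (t:ℕ) + 2 = b'
          · have := key s1' t h2t
            split_ifs at this <;> omega
          · have : 0 ≤ betaC ℓ a' b' t := by
              simp only [betaC]; split_ifs <;> omega
            omega
      set μ' : Fin ℓ → ℕ := fun t => ((lam t : ℤ) + betaC ℓ a' b' t).toNat with hμ'def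
      have hμcast : ∀ t : Fin ℓ, (μ' t : ℤ) = (lam t : ℤ) + betaC ℓ a' b' t := fun t =>
        Int.toNat_of_nonneg (nonneg t)
      refine ⟨μ', ?_, ?_⟩
      · refine ⟨⟨(a', b'), ⟨r1', s1', hrs1', rfl⟩, hμcast, ?_⟩, ν, hν, ?_⟩
        · by_cases hab' : a' = b'
          · rw [if_pos hab']
            intro t ht
            have := key1 r1' t ht
            split_ifs at this <;> omega
          · rw [if_neg hab']
            constructor
            · intro t ht
              have := key1 r1' t ht
              split_ifs at this <;> omega
            · intro t ht
              have := key1 s1' t ht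
              split_ifs at this <;> omega
        · refine ⟨(c', d'), ⟨r2', s2', hrs2', rfl⟩, ?_, ?_⟩
          · intro t
            have e1 := hν t
            have e2 := hμcast t
            have e3 := hsum' t
            dsimp only
            linarith
          · by_cases hcd' : c' = d'
            · rw [if_pos hcd']
              intro t ht
              have hk := key r2' t ht
              have hc := hμcast t
              split_ifs at hk <;> omega
            · rw [if_neg hcd']
              constructor
              · intro t ht
                have hk := key r2' t ht
                have hc := hμcast t
                split_ifs at hk <;> omega
              · intro t ht
                have hk := key s2' t ht
                have hc := hμcast t
                split_ifs at hk <;> omega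
      · simp only [hF]
        refine Prod.ext ?_ ?_
        · dsimp only
          rw [hw1']
          funext t
          have := hμcast t
          omega
        · dsimp only
          rw [hw2']
          funext t
          have h1 := hμcast t
          have h2 := hsum' t
          linarith
  rw [← himg, Set.ncard_image_of_injective _ (F_injOn ℓ lam η)]

set_option maxHeartbeats 2000000 in
theorem adj_absurd (ℓ k : ℕ) (ii : Fin k → ℕ) (hii : StrictMono ii)
    (h1 : ∀ t, 1 ≤ ii t) (hub : ∀ t, ii t ≤ ℓ)
    (p q : Fin k) (hpq : (q : ℕ) = (p : ℕ) + 1) (hadj : ii q = ii p + 1)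
    (hreg : ∀ η : Fin ℓ → ℤ,
      (∃ v ∈ {v | ∃ p q : Fin k, p ≤ q ∧ v = betaC ℓ (ii p) (ii q)},
        ∃ w ∈ {v | ∃ p q : Fin k, p ≤ q ∧ v = betaC ℓ (ii p) (ii q)}, η = v + w) →
      ∀ lam : Fin ℓ → ℕ,
        0 < tCount ℓ {pq | ∃ p q : Fin k, p ≤ q ∧ pq = (ii p, ii q)} lam η →
        tCount ℓ {pq | ∃ p q : Fin k, p ≤ q ∧ pq = (ii p, ii q)} lam η
          = mCount ℓ {v | ∃ p q : Fin k, p ≤ q ∧ v = betaC ℓ (ii p) (ii q)} η) : False := by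
  set i := ii p with hi
  have hi1 : 1 ≤ i := h1 p
  have hiℓ : i + 1 ≤ ℓ := by have := hub q; omega
  have hpq' : p ≤ q := by rw [Fin.le_def]; omega
  set lam : Fin ℓ → ℕ := fun t => if (t:ℕ) + 2 = i then 2 else 0 with hlam
  set η : Fin ℓ → ℤ := betaC ℓ i i + betaC ℓ (i+1) (i+1) with hηdef
  have hηt : ∀ t : Fin ℓ, η t = betaC ℓ i i t + betaC ℓ (i+1) (i+1) t := fun t => rfl
  set tset : Set (Fin ℓ → ℕ) :=
    {mu | arrowC ℓ {pq | ∃ p q : Fin k, p ≤ q ∧ pq = (ii p, ii q)} lam mu ∧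
      ∃ nu : Fin ℓ → ℕ, (∀ t, (nu t : ℤ) = (lam t : ℤ) + η t) ∧
        arrowC ℓ {pq | ∃ p q : Fin k, p ≤ q ∧ pq = (ii p, ii q)} mu nu} with htsetdef
  set mset : Set ((Fin ℓ → ℤ) × (Fin ℓ → ℤ)) :=
    {bb | bb.1 ∈ {v | ∃ p q : Fin k, p ≤ q ∧ v = betaC ℓ (ii p) (ii q)} ∧
      bb.2 ∈ {v | ∃ p q : Fin k, p ≤ q ∧ v = betaC ℓ (ii p) (ii q)} ∧
      bb.1 + bb.2 = η} with hmsetdef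
  set μ0 : Fin ℓ → ℕ := fun t => if (t:ℕ) + 1 = i then 2 else 0 with hμ0
  set ν0 : Fin ℓ → ℕ := fun t => if (t:ℕ) + 1 = i + 1 then 2 else 0 with hν0
  -- μ0 belongs to the t-set
  have hmem : μ0 ∈ tset := by
    rw [htsetdef]
    refine ⟨⟨(i, i), ⟨p, p, le_refl p, by rw [hi]⟩, ?_, ?_⟩,
      ν0, ?_, (i+1, i+1), ⟨q, q, le_refl q, by rw [hadj, hi]⟩, ?_, ?_⟩
    · intro t; simp only [hμ0, hlam, betaC]; split_ifs <;> omega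
    · rw [if_pos rfl]
      intro t ht
      simp only [hlam]
      rw [if_pos ht]
    · intro t
      simp only [hν0, hlam, hηt t, betaC]
      split_ifs <;> omega
    · intro t
      simp only [hν0, hμ0, betaC]
      split_ifs <;> omega
    · rw [if_pos rfl]
      intro t ht
      simp only [hμ0]
      rw [if_pos (by omega : (t:ℕ) + 1 = i)]
  -- finiteness
  have hfin : tset.Finite := by
    have hsub : tset ⊆ (fun rs : Fin k × Fin k =>
        fun t : Fin ℓ => ((lam t : ℤ) + betaC ℓ (ii rs.1) (ii rs.2) t).toNat) ''
        Set.univ := by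
      rintro μ ⟨⟨p', ⟨r, s, -, rfl⟩, hμeq, -⟩, -⟩
      refine ⟨(r, s), trivial, funext fun t => ?_⟩
      have := hμeq t
      dsimp at this ⊢
      omega
    exact (Set.finite_univ.image _).subset hsub
  have hΨfin : {v : Fin ℓ → ℤ | ∃ p q : Fin k, p ≤ q ∧ v = betaC ℓ (ii p) (ii q)}.Finite := by
    have hsub : {v : Fin ℓ → ℤ | ∃ p q : Fin k, p ≤ q ∧ v = betaC ℓ (ii p) (ii q)}
        ⊆ (fun rs : Fin k × Fin k => betaC ℓ (ii rs.1) (ii rs.2)) '' Set.univ := by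
      rintro v ⟨r, s, -, rfl⟩
      exact ⟨(r, s), trivial, rfl⟩
    exact (Set.finite_univ.image _).subset hsub
  have hmfin : mset.Finite := by
    have hsub : mset ⊆ {v : Fin ℓ → ℤ | ∃ p q : Fin k, p ≤ q ∧ v = betaC ℓ (ii p) (ii q)} ×ˢ
        {v : Fin ℓ → ℤ | ∃ p q : Fin k, p ≤ q ∧ v = betaC ℓ (ii p) (ii q)} := by
      rintro ⟨w1, w2⟩ ⟨hh1, hh2, -⟩
      exact ⟨hh1, hh2⟩
    exact ((hΨfin.prod hΨfin)).subset hsub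
  -- the distinguished pair not in the image
  set F : (Fin ℓ → ℕ) → (Fin ℓ → ℤ) × (Fin ℓ → ℤ) := fun μ =>
    (fun t => (μ t : ℤ) - lam t, fun t => η t - ((μ t : ℤ) - lam t)) with hF
  have hx0mem : ((betaC ℓ i (i+1), betaC ℓ i (i+1)) : (Fin ℓ → ℤ) × (Fin ℓ → ℤ)) ∈ mset := by
    rw [hmsetdef]
    refine ⟨⟨p, q, hpq', by rw [hadj, hi]⟩, ⟨p, q, hpq', by rw [hadj, hi]⟩,
      funext fun t => ?_⟩
    have := hηt t
    simp only [Pi.add_apply, this, betaC]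
    split_ifs <;> omega
  have hx0nimg : ((betaC ℓ i (i+1), betaC ℓ i (i+1)) : (Fin ℓ → ℤ) × (Fin ℓ → ℤ))
      ∉ F '' tset := by
    rintro ⟨μ, hμmem, hFμ⟩
    rw [htsetdef] at hμmem
    obtain ⟨⟨p', hp'S, hμeq, hcond⟩, -⟩ := hμmem
    obtain ⟨r, s, hrs, rfl⟩ := hp'S
    have hβeq : ∀ t : Fin ℓ, betaC ℓ (ii r) (ii s) t = betaC ℓ i (i+1) t := by
      intro t
      have hh1 := congrFun (congrArg Prod.fst hFμ) t
      have hh2 := hμeq t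
      simp only [hF] at hh1
      dsimp at hh1 hh2
      linarith
    have hrs' : ii r ≤ ii s := hii.monotone hrs
    have hsℓ : ii s ≤ ℓ := hub s
    have hs1 : 1 ≤ ii s := h1 s
    set t0 : Fin ℓ := ⟨ii s - 1, by omega⟩ with ht0def
    have ht0 : (t0 : ℕ) = ii s - 1 := rfl
    have hβ0 := hβeq t0
    simp only [betaC] at hβ0
    by_cases hes : ii r = ii s
    · split_ifs at hβ0 <;> omega
    · have hlt : ii r < ii s := lt_of_le_of_ne hrs' hes
      rw [if_neg hes] at hcond
      have hesi : ii s = i + 1 := by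
        split_ifs at hβ0 <;> omega
      set t1 : Fin ℓ := ⟨ii s - 2, by omega⟩ with ht1def
      have ht1 : (t1 : ℕ) = ii s - 2 := rfl
      have hc2 := hcond.2 t1 (by omega)
      simp only [hlam] at hc2
      split_ifs at hc2 <;> omega
  -- conclude
  have hssub : F '' tset ⊂ mset := by
    constructor
    · rw [htsetdef, hmsetdef, hF]
      exact img_sub ℓ k ii lam η
    · intro hc
      exact hx0nimg (hc hx0mem)
  have hcard : tset.ncard < mset.ncard := by
    rw [← Set.ncard_image_of_injective tset (by rw [hF]; exact F_injOn ℓ lam η :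
      Function.Injective F)]
    exact Set.ncard_lt_ncard hssub hmfin
  have hpos : 0 < tCount ℓ {pq | ∃ p q : Fin k, p ≤ q ∧ pq = (ii p, ii q)} lam η := by
    rw [tCount, Nat.card_coe_set_eq, ← htsetdef]
    exact (Set.nonempty_of_mem hmem).ncard_pos hfin
  have heq := hreg η ⟨betaC ℓ i i, ⟨p, p, le_refl p, by rw [hi]⟩,
    betaC ℓ (i+1) (i+1), ⟨q, q, le_refl q, by rw [hadj, hi]⟩, hηdef⟩ lam hpos
  rw [tCount, Nat.card_coe_set_eq, ← htsetdef, mCount, Nat.card_coe_set_eq,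
    ← hmsetdef] at heq
  omega

/-- `Ψ = Ψ(i_1, …, i_k)` is regular (`t_{λ,η} > 0 ⟹ t_{λ,η} = m_η` for all
`η ∈ Ψ + Ψ` and all `λ`) iff `i_{r+1} ≠ i_r + 1` for all `1 ≤ r < k`. -/
theorem stmt_12 (ℓ k : ℕ) (hℓ : 2 ≤ ℓ) (hk : 1 ≤ k)
    (ii : Fin k → ℕ) (hii : StrictMono ii) (h1 : ∀ t, 1 ≤ ii t) (hub : ∀ t, ii t ≤ ℓ)
    (S : Set (ℕ × ℕ)) (hS : S = {pq | ∃ p q : Fin k, p ≤ q ∧ pq = (ii p, ii q)})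
    (Ψv : Set (Fin ℓ → ℤ))
    (hΨv : Ψv = {v | ∃ p q : Fin k, p ≤ q ∧ v = betaC ℓ (ii p) (ii q)}) :
    (∀ η : Fin ℓ → ℤ, (∃ v ∈ Ψv, ∃ w ∈ Ψv, η = v + w) →
        ∀ lam : Fin ℓ → ℕ, 0 < tCount ℓ S lam η → tCount ℓ S lam η = mCount ℓ Ψv η) ↔
      (∀ p q : Fin k, (q : ℕ) = (p : ℕ) + 1 → ii q ≠ ii p + 1) := by
  subst hS
  subst hΨv
  constructor
  · intro hreg r s hrs hadj
    exact adj_absurd ℓ k ii hii h1 hub r s hrs hadj hreg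
  · intro hgap' η _ lam hpos
    have hgap : ∀ p q : Fin k, p < q → ii p + 2 ≤ ii q := by
      intro p q h
      have hplt : (p : ℕ) < (q : ℕ) := Fin.lt_def.mp h
      have hpk : (p : ℕ) + 1 < k := lt_of_le_of_lt hplt q.isLt
      set p' : Fin k := ⟨(p : ℕ) + 1, hpk⟩ with hp'
      have h1' := hgap' p p' rfl
      have h2 : ii p < ii p' := hii (Fin.lt_def.mpr (by simp [hp']))
      have h3 : ii p' ≤ ii q := hii.monotone (Fin.le_def.mpr (by simp [hp']; omega))
      omega
    exact gap_regular ℓ k ii hii h1 hub hgap η lam hpos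
end

section
/- Let Δ be the quiver with vertex set ℕ² and arrows (m,n) ← (m+1, n+1) for all (m,n) ∈ ℕ², and (m,n) ← (m+2, n−1) for all (m,n) ∈ ℕ² with n ≥ 1. Then Δ has exactly three connected components, whose vertex sets are C_r = {(m,n) ∈ ℕ² : m − n ≡ r (mod 3)} for r = 0, 1, 2, and the full subquivers of Δ on C_0, C_1 and C_2 are pairwise non-isomorphic. -/
/-- The arrow relation of the quiver `Δ` on `ℕ²` : arrows `(m,n) ← (m+1, n+1)` and, for
`n ≥ 1`, `(m,n) ← (m+2, n−1)`.  `arr17 p q` means that there is an arrow `p ← q`. -/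
def arr17 (p q : ℕ × ℕ) : Prop :=
  q = (p.1 + 1, p.2 + 1) ∨ (1 ≤ p.2 ∧ q = (p.1 + 2, p.2 - 1))

abbrev Rel17 (u v : ℕ × ℕ) : Prop := arr17 u v ∨ arr17 v u

abbrev Cl17 (r : ℤ) := {p : ℕ × ℕ // ((p.1 : ℤ) - p.2) % 3 = r}

lemma arr17_res {p q : ℕ × ℕ} (h : arr17 p q) :
    ((p.1 : ℤ) - p.2) % 3 = ((q.1 : ℤ) - q.2) % 3 := by
  rcases h with h | ⟨h1, h⟩ <;> subst h <;> simp <;> omega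

lemma toBase17 : ∀ n m : ℕ, Relation.ReflTransGen Rel17 (m, n) (m + 2 * n, 0) := by
  intro n
  induction n with
  | zero => intro m; simpa using Relation.ReflTransGen.refl
  | succ n ih =>
    intro m
    have h1 : Rel17 (m, n + 1) (m + 2, n) := Or.inl (Or.inr ⟨by omega, rfl⟩)
    have h2 : m + 2 * (n + 1) = (m + 2) + 2 * n := by ring
    rw [h2]
    exact Relation.ReflTransGen.head h1 (ih (m + 2))

lemma step17 (k : ℕ) : Relation.ReflTransGen Rel17 (k, 0) (k + 3, 0) := by
  have h1 : Rel17 (k, 0) (k + 1, 1) := Or.inl (Or.inl rfl)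
  have h2 : Rel17 (k + 1, 1) (k + 3, 0) := Or.inl (Or.inr ⟨le_refl 1, rfl⟩)
  exact Relation.ReflTransGen.head h1 (Relation.ReflTransGen.head h2 .refl)

lemma base17 : ∀ t k : ℕ, Relation.ReflTransGen Rel17 (k, 0) (k + 3 * t, 0) := by
  intro t
  induction t with
  | zero => intro k; simpa using Relation.ReflTransGen.refl
  | succ t ih =>
    intro k
    have h2 : k + 3 * (t + 1) = (k + 3) + 3 * t := by ring
    rw [h2]
    exact (step17 k).trans (ih (k + 3))

lemma sym17 : Symmetric (Relation.ReflTransGen Rel17) :=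
  have : Std.Symm Rel17 := ⟨fun _ _ h => h.symm⟩
  fun a b h => Std.Symm.symm a b h

/-- `Sp u` : `u` has no outgoing arrow (nothing `u` points at) and at most one incoming. -/
def Sp17 (u : ℕ × ℕ) : Prop :=
  (¬∃ p, arr17 p u) ∧ ¬∃ v w, arr17 u v ∧ arr17 u w ∧ v ≠ w

def OutTwo17 (v : ℕ × ℕ) : Prop := ∃ p p', arr17 p v ∧ arr17 p' v ∧ p ≠ p'

lemma sp17_iff (u : ℕ × ℕ) : Sp17 u ↔ u = (0, 0) ∨ u = (1, 0) := by
  obtain ⟨m, n⟩ := u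
  constructor
  · rintro ⟨h1, h2⟩
    by_contra hc
    simp only [Prod.mk.injEq, not_or, not_and] at hc
    by_cases hm1 : 1 ≤ m ∧ 1 ≤ n
    · exact h1 ⟨(m - 1, n - 1), Or.inl (by simp only [Prod.mk.injEq]; omega)⟩
    · by_cases hm2 : 2 ≤ m
      · exact h1 ⟨(m - 2, n + 1), Or.inr ⟨by omega, by simp only [Prod.mk.injEq]; omega⟩⟩
      · have hn : 1 ≤ n := by omega
        exact h2 ⟨(m + 1, n + 1), (m + 2, n - 1), Or.inl rfl, Or.inr ⟨hn, rfl⟩,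
          by simp only [ne_eq, Prod.mk.injEq]; omega⟩
  · rintro (h | h) <;> injection h with e1 e2 <;> subst e1 <;> subst e2 <;> constructor
    · rintro ⟨p, h | ⟨hp1, h⟩⟩ <;> simp only [Prod.mk.injEq] at h <;> omega
    · rintro ⟨v, w, hv, hw, hvw⟩
      rcases hv with hv | ⟨hv1, _⟩
      · rcases hw with hw | ⟨hw1, _⟩
        · exact hvw (hv.trans hw.symm)
        · simp at hw1
      · simp at hv1
    · rintro ⟨p, h | ⟨hp1, h⟩⟩ <;> simp only [Prod.mk.injEq] at h <;> omega
    · rintro ⟨v, w, hv, hw, hvw⟩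
      rcases hv with hv | ⟨hv1, _⟩
      · rcases hw with hw | ⟨hw1, _⟩
        · exact hvw (hv.trans hw.symm)
        · simp at hw1
      · simp at hv1

lemma outTwo17_iff (v : ℕ × ℕ) : OutTwo17 v ↔ 2 ≤ v.1 ∧ 1 ≤ v.2 := by
  obtain ⟨m, n⟩ := v
  show OutTwo17 (m, n) ↔ 2 ≤ m ∧ 1 ≤ n
  constructor
  · rintro ⟨p, p', hp, hp', hne⟩
    rcases hp with h | ⟨h1, h⟩ <;> rcases hp' with h' | ⟨h1', h'⟩ <;>
        simp only [Prod.mk.injEq] at h h'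
    · exact absurd (Prod.ext_iff.2 ⟨by omega, by omega⟩) hne
    · constructor <;> omega
    · constructor <;> omega
    · exact absurd (Prod.ext_iff.2 ⟨by omega, by omega⟩) hne
  · rintro ⟨h1, h2⟩
    exact ⟨(m - 1, n - 1), (m - 2, n + 1),
      Or.inl (by simp only [Prod.mk.injEq]; omega),
      Or.inr ⟨by omega, by simp only [Prod.mk.injEq]; omega⟩,
      by simp only [ne_eq, Prod.mk.injEq]; omega⟩

lemma cl_of_arr_left {r : ℤ} (u : Cl17 r) {p : ℕ × ℕ} (h : arr17 p u.1) :
    ((p.1 : ℤ) - p.2) % 3 = r := (arr17_res h).trans u.2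

lemma cl_of_arr_right {r : ℤ} (u : Cl17 r) {v : ℕ × ℕ} (h : arr17 u.1 v) :
    ((v.1 : ℤ) - v.2) % 3 = r := (arr17_res h).symm.trans u.2

lemma sp_transfer {r r' : ℤ} (F : Cl17 r ≃ Cl17 r')
    (hF : ∀ u v, arr17 u.1 v.1 ↔ arr17 (F u).1 (F v).1)
    (u : Cl17 r) (h : Sp17 u.1) : Sp17 (F u).1 := by
  obtain ⟨h1, h2⟩ := h
  constructor
  · rintro ⟨p, hp⟩
    have hp' : ((p.1 : ℤ) - p.2) % 3 = r' := cl_of_arr_left (F u) hp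
    have H := hF (F.symm ⟨p, hp'⟩) u
    rw [F.apply_symm_apply] at H
    exact h1 ⟨(F.symm ⟨p, hp'⟩).1, H.2 hp⟩
  · rintro ⟨v, w, hv, hw, hvw⟩
    have hv' : ((v.1 : ℤ) - v.2) % 3 = r' := cl_of_arr_right (F u) hv
    have hw' : ((w.1 : ℤ) - w.2) % 3 = r' := cl_of_arr_right (F u) hw
    have Hv := hF u (F.symm ⟨v, hv'⟩)
    rw [F.apply_symm_apply] at Hv
    have Hw := hF u (F.symm ⟨w, hw'⟩)
    rw [F.apply_symm_apply] at Hw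
    refine h2 ⟨(F.symm ⟨v, hv'⟩).1, (F.symm ⟨w, hw'⟩).1, Hv.2 hv, Hw.2 hw, ?_⟩
    intro hc
    exact hvw (congrArg Subtype.val (F.symm.injective (Subtype.ext hc)))

def BCl17 (r : ℤ) : Prop :=
  ∃ u v : Cl17 r, Sp17 u.1 ∧ arr17 u.1 v.1 ∧ OutTwo17 v.1

lemma b_transfer {r r' : ℤ} (F : Cl17 r ≃ Cl17 r')
    (hF : ∀ u v, arr17 u.1 v.1 ↔ arr17 (F u).1 (F v).1)
    (h : BCl17 r) : BCl17 r' := by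
  obtain ⟨u, v, hsp, harr, p, p', hp, hp', hne⟩ := h
  refine ⟨F u, F v, sp_transfer F hF u hsp, (hF u v).1 harr, ?_⟩
  have hp1 : ((p.1 : ℤ) - p.2) % 3 = r := cl_of_arr_left v hp
  have hp1' : ((p'.1 : ℤ) - p'.2) % 3 = r := cl_of_arr_left v hp'
  refine ⟨(F ⟨p, hp1⟩).1, (F ⟨p', hp1'⟩).1,
    (hF ⟨p, hp1⟩ v).1 hp, (hF ⟨p', hp1'⟩ v).1 hp', ?_⟩
  intro hc
  exact hne (congrArg Subtype.val (F.injective (Subtype.ext hc)))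

lemma symm_hF {r r' : ℤ} (F : Cl17 r ≃ Cl17 r')
    (hF : ∀ u v, arr17 u.1 v.1 ↔ arr17 (F u).1 (F v).1) :
    ∀ u v : Cl17 r', arr17 u.1 v.1 ↔ arr17 (F.symm u).1 (F.symm v).1 := by
  intro u v
  have H := hF (F.symm u) (F.symm v)
  rw [F.apply_symm_apply, F.apply_symm_apply] at H
  exact H.symm

lemma sp_0 : ∃ u : Cl17 0, Sp17 u.1 :=
  ⟨⟨(0, 0), by norm_num⟩, (sp17_iff _).2 (Or.inl rfl)⟩

lemma sp_1 : ∃ u : Cl17 1, Sp17 u.1 :=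
  ⟨⟨(1, 0), by norm_num⟩, (sp17_iff _).2 (Or.inr rfl)⟩

lemma no_sp_2 : ¬∃ u : Cl17 2, Sp17 u.1 := by
  rintro ⟨u, hu⟩
  have := u.2
  rcases (sp17_iff _).1 hu with h | h <;> rw [h] at this <;> norm_num at this

lemma b_1 : BCl17 1 := by
  refine ⟨⟨(1, 0), by norm_num⟩, ⟨(2, 1), by norm_num⟩,
    (sp17_iff _).2 (Or.inr rfl), Or.inl rfl, (outTwo17_iff _).2 ⟨by norm_num, by norm_num⟩⟩

lemma not_b_0 : ¬ BCl17 0 := by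
  rintro ⟨u, v, hsp, harr, hot⟩
  have hu2 := u.2
  rcases (sp17_iff _).1 hsp with h | h
  · rcases harr with ha | ⟨h1, _⟩
    · have := (outTwo17_iff _).1 hot
      rw [ha, h] at this
      simp at this
    · rw [h] at h1; simp at h1
  · rw [h] at hu2; norm_num at hu2

/-- `Δ` has exactly three connected components, with vertex sets
`C_r = {(m,n) : m − n ≡ r (mod 3)}`, `r = 0, 1, 2`, and the full subquivers on
`C_0, C_1, C_2` are pairwise non-isomorphic. -/
theorem stmt_17 :
    (∀ p q : ℕ × ℕ,
        Relation.ReflTransGen (fun u v => arr17 u v ∨ arr17 v u) p q ↔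
          ((p.1 : ℤ) - p.2) % 3 = ((q.1 : ℤ) - q.2) % 3) ∧
      (∀ r r' : ℤ, 0 ≤ r → r < 3 → 0 ≤ r' → r' < 3 → r ≠ r' →
        ¬∃ F : {p : ℕ × ℕ // ((p.1 : ℤ) - p.2) % 3 = r} ≃
            {p : ℕ × ℕ // ((p.1 : ℤ) - p.2) % 3 = r'},
          ∀ u v, arr17 u.1 v.1 ↔ arr17 (F u).1 (F v).1) := by
  constructor
  · intro p q
    constructor
    · intro h
      induction h with
      | refl => rfl
      | tail _ hbc ih =>
        rcases hbc with hbc | hbc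
        · exact ih.trans (arr17_res hbc)
        · exact ih.trans (arr17_res hbc).symm
    · obtain ⟨pm, pn⟩ := p
      obtain ⟨qm, qn⟩ := q
      intro hres
      simp only at hres
      obtain ⟨t, ht⟩ : ∃ t : ℕ,
          qm + 2 * qn = pm + 2 * pn + 3 * t ∨ pm + 2 * pn = qm + 2 * qn + 3 * t := by
        rcases le_total (pm + 2 * pn) (qm + 2 * qn) with h | h
        · refine ⟨(qm + 2 * qn - (pm + 2 * pn)) / 3, Or.inl ?_⟩
          omega
        · refine ⟨(pm + 2 * pn - (qm + 2 * qn)) / 3, Or.inr ?_⟩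
          omega
      have h1 := toBase17 pn pm
      have h2 := toBase17 qn qm
      rcases ht with ht | ht
      · exact (h1.trans (ht ▸ base17 t (pm + 2 * pn))).trans (sym17 h2)
      · exact h1.trans (sym17 (h2.trans (ht ▸ base17 t (qm + 2 * qn))))
  · intro r r' h0 h3 h0' h3' hne
    rintro ⟨F, hF⟩
    interval_cases r <;> interval_cases r' <;>
      first
        | exact hne rfl
        | exact no_sp_2 (⟨F sp_0.choose, sp_transfer F hF _ sp_0.choose_spec⟩)
        | exact no_sp_2 (⟨F sp_1.choose, sp_transfer F hF _ sp_1.choose_spec⟩)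
        | exact no_sp_2 (⟨F.symm sp_0.choose, sp_transfer F.symm (symm_hF F hF) _ sp_0.choose_spec⟩)
        | exact no_sp_2 (⟨F.symm sp_1.choose, sp_transfer F.symm (symm_hF F hF) _ sp_1.choose_spec⟩)
        | exact not_b_0 (b_transfer F hF b_1)
        | exact not_b_0 (b_transfer F.symm (symm_hF F hF) b_1)
end
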